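/- arXiv:2006.02794 — 4 statements merged into one kernel-verified Lean document; each statement's English description precedes it below -/
import Mathlib

section
/- Let S be a set of positive integers and let n ≥ 1 and k ≥ 1 be integers. Then L_S(n,k) = Σ_{s∈S} s·(n−1)_{s−1}·L_S(n−s, k−1), where the sum has only finitely many nonzero terms (terms with s > n vanish) and (m)_j denotes the falling factorial m(m−1)⋯(m−j+1). -/
open Finset
open scoped Classical

/-- A partition of `Fin N` into nonempty lists of distinct elements:
every element lies in exactly one list of `P`. -/
def IsListPartition {N : ℕ} (P : Finset (List (Fin N))) : Prop :=
  (∀ l ∈ P, l ≠ [] ∧ l.Nodup) ∧ ∀ x : Fin N, ∃! l, l ∈ P ∧ x ∈ l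

/-- The set of partitions of `{1,…,n+r}` (encoded as `Fin (n+r)`) into `k+r` nonempty
lists whose lengths lie in `S`, such that the first `r` elements lie in distinct lists. -/
def srLahSet (S : Set ℕ) (r n k : ℕ) : Set (Finset (List (Fin (n + r)))) :=
  {P | IsListPartition P ∧ P.card = k + r ∧ (∀ l ∈ P, l.length ∈ S) ∧
    ∀ i j : Fin (n + r), (i : ℕ) < r → (j : ℕ) < r → i ≠ j →
      ∀ l ∈ P, i ∈ l → j ∉ l}

/-- The `(S,r)`-Lah number `L_{S,r}(n,k)`. -/
noncomputable def srLah (S : Set ℕ) (r n k : ℕ) : ℕ := Nat.card (srLahSet S r n k)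

/-- The `(S,r)`-Lah number with integer arguments, zero for negative arguments. -/
noncomputable def srLahZ (S : Set ℕ) (r : ℕ) (n k : ℤ) : ℤ :=
  if 0 ≤ n ∧ 0 ≤ k then srLah S r n.toNat k.toNat else 0


-- ### Auxiliary development ###
def GS (S : Set ℕ) (α : Type) (k : ℕ) : Set (Finset (List α)) :=
  {P | (∀ l ∈ P, l ≠ [] ∧ l.Nodup) ∧ (∀ x : α, ∃! l, l ∈ P ∧ x ∈ l) ∧ P.card = k ∧
    ∀ l ∈ P, l.length ∈ S}

section helpers

variable {S : Set ℕ} {α β : Type} {k : ℕ}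

lemma GS_disj {P : Finset (List α)} (hP : P ∈ GS S α k) {l l' : List α}
    (hl : l ∈ P) (hl' : l' ∈ P) {x : α} (hx : x ∈ l) (hx' : x ∈ l') : l = l' := by
  obtain ⟨m, _, hm⟩ := hP.2.1 x
  rw [hm l ⟨hl, hx⟩, hm l' ⟨hl', hx'⟩]

lemma GS_finite [Fintype α] : (GS S α k).Finite := by
  have h1 : {l : List α | l.length ≤ Fintype.card α}.Finite := List.finite_length_le α _
  apply Set.Finite.subset (Set.Finite.subset (Finset.finite_toSet h1.toFinset.powerset) le_rfl)
  intro P hP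
  simp only [Finset.coe_powerset, Set.mem_preimage, Set.mem_powerset_iff]
  intro l hl
  simp only [Finset.mem_coe] at hl
  simp only [Set.Finite.coe_toFinset, Set.mem_setOf_eq]
  exact ((hP.1 l hl).2).length_le_card

/-- transport along an equiv -/
lemma map_mem_GS (e : α ≃ β) {P : Finset (List α)} (hP : P ∈ GS S α k) :
    P.image (List.map e) ∈ GS S β k := by
  obtain ⟨hne, huniq, hcard, hlen⟩ := hP
  refine ⟨?_, ?_, ?_, ?_⟩
  · rintro l' hl'
    simp only [Finset.mem_image] at hl'
    obtain ⟨l, hl, rfl⟩ := hl'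
    exact ⟨by simpa using (hne l hl).1, ((hne l hl).2).map e.injective⟩
  · intro y
    obtain ⟨l, ⟨hl, hxl⟩, hu⟩ := huniq (e.symm y)
    refine ⟨l.map e, ⟨Finset.mem_image_of_mem _ hl, ?_⟩, ?_⟩
    · simpa using List.mem_map_of_mem (f := e) hxl
    · rintro l' ⟨hl', hyl'⟩
      simp only [Finset.mem_image] at hl'
      obtain ⟨m, hm, rfl⟩ := hl'
      have : e.symm y ∈ m := by
        simp only [List.mem_map] at hyl'
        obtain ⟨a, ha, rfl⟩ := hyl'
        simpa using ha
      rw [hu m ⟨hm, this⟩]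
  · rw [Finset.card_image_of_injective _ (List.map_injective_iff.2 e.injective), hcard]
  · rintro l' hl'
    simp only [Finset.mem_image] at hl'
    obtain ⟨l, hl, rfl⟩ := hl'
    simpa using hlen l hl

lemma card_GS_congr (e : α ≃ β) : Nat.card (GS S α k) = Nat.card (GS S β k) := by
  apply Nat.card_congr
  refine ⟨fun P => ⟨P.1.image (List.map e), map_mem_GS e P.2⟩,
    fun Q => ⟨Q.1.image (List.map e.symm), map_mem_GS e.symm Q.2⟩, ?_, ?_⟩ <;>
  · rintro ⟨P, hP⟩
    ext l
    simp [Finset.image_image, Function.comp_def, List.map_map]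

lemma srLahSet_eq (S : Set ℕ) (n k : ℕ) : srLahSet S 0 n k = GS S (Fin n) k := by
  ext P
  simp only [srLahSet, GS, IsListPartition, Set.mem_setOf_eq]
  constructor
  · rintro ⟨⟨h1, h2⟩, h3, h4, _⟩
    exact ⟨h1, h2, h3, h4⟩
  · rintro ⟨h1, h2, h3, h4⟩
    exact ⟨⟨h1, h2⟩, h3, h4, fun i j hi => absurd hi (Nat.not_lt_zero _)⟩

lemma srLah_eq (S : Set ℕ) (n k : ℕ) : srLah S 0 n k = Nat.card (GS S (Fin n) k) := by
  rw [srLah, srLahSet_eq]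

end helpers
section restr
open scoped Classical
variable {α : Type}

noncomputable def restr (l₀ : List α) (l : List α) : List {x : α // x ∉ l₀} :=
  l.filterMap fun x => if h : x ∉ l₀ then some ⟨x, h⟩ else none

lemma map_val_restr {l₀ l : List α} (h : ∀ x ∈ l, x ∉ l₀) :
    (restr l₀ l).map Subtype.val = l := by
  induction l with
  | nil => rfl
  | cons a t ih =>
    have ha : a ∉ l₀ := h a List.mem_cons_self
    simp only [restr, List.filterMap_cons, dif_pos ha]
    simpa [restr] using ih fun x hx => h x (List.mem_cons_of_mem _ hx)

lemma restr_map_val {l₀ : List α} (m : List {x : α // x ∉ l₀}) :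
    restr l₀ (m.map Subtype.val) = m := by
  induction m with
  | nil => rfl
  | cons a t ih =>
    simp only [restr, List.map_cons, List.filterMap_cons, dif_pos a.2]
    simpa [restr] using ih

lemma length_restr {l₀ l : List α} (h : ∀ x ∈ l, x ∉ l₀) :
    (restr l₀ l).length = l.length := by
  conv_rhs => rw [← map_val_restr h]
  simp

lemma nodup_restr {l₀ l : List α} (h : ∀ x ∈ l, x ∉ l₀) (hl : l.Nodup) :
    (restr l₀ l).Nodup := by
  rw [← map_val_restr h] at hl
  exact hl.of_map _

lemma mem_restr {l₀ l : List α} (h : ∀ x ∈ l, x ∉ l₀) {y : {x : α // x ∉ l₀}} :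
    y ∈ restr l₀ l ↔ y.1 ∈ l := by
  conv_rhs => rw [← map_val_restr h]
  rw [List.mem_map]
  constructor
  · exact fun hy => ⟨y, hy, rfl⟩
  · rintro ⟨z, hz, hzy⟩
    rwa [← Subtype.ext hzy]

lemma restr_ne_nil {l₀ l : List α} (h : ∀ x ∈ l, x ∉ l₀) (hl : l ≠ []) :
    restr l₀ l ≠ [] := by
  intro hc
  apply hl
  rw [← map_val_restr h, hc, List.map_nil]

end restr
section main
open scoped Classical
variable {S : Set ℕ} {α : Type} {k : ℕ}

noncomputable def Psi (S : Set ℕ) (x₀ : α) (k : ℕ)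
    (p : Σ l : {l : List α // l.Nodup ∧ x₀ ∈ l ∧ l.length ∈ S},
      ↥(GS S {x : α // x ∉ l.1} k)) : Finset (List α) :=
  insert p.1.1 (p.2.1.image (List.map Subtype.val))

lemma val_map_avoid {l₀ : List α} {Q : Finset (List {x : α // x ∉ l₀})}
    {m : List α} (hm : m ∈ Q.image (List.map Subtype.val)) : ∀ x ∈ m, x ∉ l₀ := by
  simp only [Finset.mem_image] at hm
  obtain ⟨q, _, rfl⟩ := hm
  intro x hx
  simp only [List.mem_map] at hx
  obtain ⟨y, _, rfl⟩ := hx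
  exact y.2

lemma self_not_mem_image {l₀ : List α} (hx₀ : (x₀ : α) ∈ l₀)
    {Q : Finset (List {x : α // x ∉ l₀})} : l₀ ∉ Q.image (List.map Subtype.val) := by
  intro hc
  exact val_map_avoid hc x₀ hx₀ hx₀

lemma Psi_mem (x₀ : α)
    (p : Σ l : {l : List α // l.Nodup ∧ x₀ ∈ l ∧ l.length ∈ S},
      ↥(GS S {x : α // x ∉ l.1} k)) : Psi S x₀ k p ∈ GS S α (k + 1) := by
  obtain ⟨⟨l, hnd, hx₀, hlen⟩, Q, hQ⟩ := p
  simp only [Psi]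
  refine ⟨?_, ?_, ?_, ?_⟩
  · intro m hm
    rcases Finset.mem_insert.1 hm with rfl | hm
    · exact ⟨List.ne_nil_of_mem hx₀, hnd⟩
    · simp only [Finset.mem_image] at hm
      obtain ⟨q, hq, rfl⟩ := hm
      exact ⟨fun hc => (hQ.1 q hq).1 (List.map_eq_nil_iff.1 hc),
        ((hQ.1 q hq).2).map Subtype.val_injective⟩
  · intro x
    by_cases hx : x ∈ l
    · refine ⟨l, ⟨Finset.mem_insert_self _ _, hx⟩, ?_⟩
      rintro m ⟨hm, hxm⟩
      rcases Finset.mem_insert.1 hm with rfl | hm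
      · rfl
      · exact absurd hx (val_map_avoid hm x hxm)
    · obtain ⟨q, ⟨hq, hyq⟩, hu⟩ := hQ.2.1 ⟨x, hx⟩
      refine ⟨q.map Subtype.val, ⟨Finset.mem_insert_of_mem (Finset.mem_image_of_mem _ hq),
        List.mem_map_of_mem hyq⟩, ?_⟩
      rintro m ⟨hm, hxm⟩
      rcases Finset.mem_insert.1 hm with rfl | hm
      · exact absurd hxm hx
      · simp only [Finset.mem_image] at hm
        obtain ⟨q', hq', rfl⟩ := hm
        have : (⟨x, hx⟩ : {x : α // x ∉ l}) ∈ q' := by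
          simp only [List.mem_map] at hxm
          obtain ⟨y, hy, hyx⟩ := hxm
          have hyy : y = ⟨x, hx⟩ := Subtype.ext hyx
          rwa [hyy] at hy
        rw [hu q' ⟨hq', this⟩]
  · rw [Finset.card_insert_of_notMem (self_not_mem_image hx₀),
      Finset.card_image_of_injective _ (List.map_injective_iff.2 Subtype.val_injective),
      hQ.2.2.1]
  · intro m hm
    rcases Finset.mem_insert.1 hm with rfl | hm
    · exact hlen
    · simp only [Finset.mem_image] at hm
      obtain ⟨q, hq, rfl⟩ := hm
      simpa using hQ.2.2.2 q hq

lemma Psi_inj (x₀ : α) : Function.Injective (Psi S x₀ k) := by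
  rintro ⟨⟨l, hnd, hx₀, hlen⟩, Q, hQ⟩ ⟨⟨l', hnd', hx₀', hlen'⟩, Q', hQ'⟩ h
  simp only [Psi] at h
  have hll' : l = l' := by
    have h1 : l ∈ insert l' (Q'.image (List.map Subtype.val)) := by
      rw [← h]; exact Finset.mem_insert_self _ _
    rcases Finset.mem_insert.1 h1 with h2 | h2
    · exact h2
    · exact absurd hx₀ (fun hc => val_map_avoid h2 x₀ hc hx₀')
  subst hll'
  have hQQ' : Q = Q' := by
    have := congrArg (fun s => Finset.erase s l) h
    simp only [Finset.erase_insert (self_not_mem_image hx₀),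
      Finset.erase_insert (self_not_mem_image hx₀')] at this
    exact Finset.image_injective (List.map_injective_iff.2 Subtype.val_injective) this
  subst hQQ'
  rfl

lemma Psi_surj (x₀ : α) {P : Finset (List α)} (hP : P ∈ GS S α (k + 1)) :
    ∃ p, Psi S x₀ k p = P := by
  obtain ⟨l₀, ⟨hl₀P, hx₀⟩, huniq⟩ := hP.2.1 x₀
  have hnd : l₀.Nodup := (hP.1 l₀ hl₀P).2
  have hlen : l₀.length ∈ S := hP.2.2.2 l₀ hl₀P
  have hdisj : ∀ m ∈ P.erase l₀, ∀ x ∈ m, x ∉ l₀ := by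
    intro m hm x hx hxl₀
    exact (Finset.mem_erase.1 hm).1
      (GS_disj hP (Finset.mem_of_mem_erase hm) hl₀P hx hxl₀)
  set Q : Finset (List {x : α // x ∉ l₀}) := (P.erase l₀).image (restr l₀) with hQdef
  have hrestr_inj : Set.InjOn (restr l₀) ↑(P.erase l₀) := by
    intro m hm m' hm' hmm'
    rw [← map_val_restr (hdisj m hm), ← map_val_restr (hdisj m' hm'), hmm']
  have hQ : Q ∈ GS S {x : α // x ∉ l₀} k := by
    refine ⟨?_, ?_, ?_, ?_⟩
    · intro m' hm'
      simp only [hQdef, Finset.mem_image] at hm'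
      obtain ⟨m, hm, rfl⟩ := hm'
      have hmP := Finset.mem_of_mem_erase hm
      exact ⟨restr_ne_nil (hdisj m hm) (hP.1 m hmP).1, nodup_restr (hdisj m hm) (hP.1 m hmP).2⟩
    · rintro ⟨y, hy⟩
      obtain ⟨l₁, ⟨hl₁P, hyl₁⟩, hu₁⟩ := hP.2.1 y
      have hl₁ : l₁ ∈ P.erase l₀ := by
        refine Finset.mem_erase.2 ⟨?_, hl₁P⟩
        rintro rfl
        exact hy hyl₁
      refine ⟨restr l₀ l₁, ⟨Finset.mem_image_of_mem _ hl₁, (mem_restr (hdisj _ hl₁)).2 hyl₁⟩, ?_⟩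
      rintro m' ⟨hm', hym'⟩
      simp only [hQdef, Finset.mem_image] at hm'
      obtain ⟨m, hm, rfl⟩ := hm'
      have : y ∈ m := (mem_restr (hdisj m hm)).1 hym'
      rw [hu₁ m ⟨Finset.mem_of_mem_erase hm, this⟩]
    · rw [hQdef, Finset.card_image_of_injOn hrestr_inj, Finset.card_erase_of_mem hl₀P,
        hP.2.2.1]
      rfl
    · intro m' hm'
      simp only [hQdef, Finset.mem_image] at hm'
      obtain ⟨m, hm, rfl⟩ := hm'
      rw [length_restr (hdisj m hm)]
      exact hP.2.2.2 m (Finset.mem_of_mem_erase hm)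
  refine ⟨⟨⟨l₀, hnd, hx₀, hlen⟩, Q, hQ⟩, ?_⟩
  simp only [Psi, hQdef, Finset.image_image]
  have himg : (P.erase l₀).image (List.map Subtype.val ∘ restr l₀) = P.erase l₀ := by
    have h1 : (P.erase l₀).image (List.map Subtype.val ∘ restr l₀) = (P.erase l₀).image id :=
      Finset.image_congr (fun m hm => map_val_restr (hdisj m hm))
    rw [h1, Finset.image_id]
  rw [himg, Finset.insert_erase hl₀P]

lemma card_GS_succ (x₀ : α) :
    Nat.card (GS S α (k + 1)) =
      Nat.card (Σ l : {l : List α // l.Nodup ∧ x₀ ∈ l ∧ l.length ∈ S},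
        ↥(GS S {x : α // x ∉ l.1} k)) := by
  apply Nat.card_congr
  refine (Equiv.ofBijective (fun p => (⟨Psi S x₀ k p, Psi_mem x₀ p⟩ : ↥(GS S α (k+1)))) ⟨?_, ?_⟩).symm
  · intro p p' h
    exact Psi_inj x₀ (congrArg Subtype.val h)
  · rintro ⟨P, hP⟩
    obtain ⟨p, hp⟩ := Psi_surj x₀ hP
    exact ⟨p, Subtype.ext hp⟩

end main
section counting
open scoped Classical
variable {β : Type}

noncomputable def listEquivEmb (β : Type) (s : ℕ) :
    {l : List β // l.Nodup ∧ l.length = s} ≃ (Fin s ↪ β) where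
  toFun l := ⟨fun i => l.1.get (Fin.cast l.2.2.symm i),
    (List.nodup_iff_injective_get.1 l.2.1).comp fun i j h => by
      simpa using congrArg (Fin.cast l.2.2) h⟩
  invFun f := ⟨List.ofFn f, List.nodup_ofFn.2 f.2, List.length_ofFn⟩
  left_inv l := by
    apply Subtype.ext
    apply List.ext_get (by simp [l.2.2])
    intro i h1 h2
    simp [List.get_ofFn]
  right_inv f := by
    ext i
    simp [List.get_ofFn]

lemma descFact_sub (m t : ℕ) :
    (m + 1).descFactorial (t + 1) - m.descFactorial (t + 1) =
      (t + 1) * m.descFactorial t := by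
  rw [Nat.succ_descFactorial_succ, Nat.descFactorial_succ, ← Nat.sub_mul]
  by_cases ht : t ≤ m
  · congr 1
    omega
  · rw [Nat.descFactorial_eq_zero_iff_lt.2 (by omega), Nat.mul_zero, Nat.mul_zero]

lemma card_lists [Fintype β] (x₀ : β) (s : ℕ) :
    Nat.card {l : List β // l.Nodup ∧ x₀ ∈ l ∧ l.length = s + 1} =
      (s + 1) * (Fintype.card β - 1).descFactorial s := by
  have e1 : {l : List β // l.Nodup ∧ x₀ ∈ l ∧ l.length = s + 1} ≃
      {x : {l : List β // l.Nodup ∧ l.length = s + 1} // x₀ ∈ x.1} :=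
    ((Equiv.subtypeSubtypeEquivSubtypeInter _ _).trans
      (Equiv.subtypeEquivRight fun l => by tauto)).symm
  have e2 : {x : {l : List β // l.Nodup ∧ l.length = s + 1} // x₀ ∈ x.1} ≃
      {f : Fin (s + 1) ↪ β // x₀ ∈ Set.range f} := by
    refine (listEquivEmb β (s + 1)).subtypeEquiv fun l => ?_
    simp only [listEquivEmb, Equiv.coe_fn_mk, Set.mem_range, Function.Embedding.coeFn_mk]
    rw [List.mem_iff_get]
    constructor
    · rintro ⟨i, hi⟩
      exact ⟨Fin.cast l.2.2 i, by simpa using hi⟩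
    · rintro ⟨i, hi⟩
      exact ⟨Fin.cast l.2.2.symm i, by simpa using hi⟩
  have e3 : {f : Fin (s + 1) ↪ β // x₀ ∉ Set.range f} ≃ (Fin (s + 1) ↪ {y : β // y ≠ x₀}) := by
    refine (Equiv.subtypeEquivRight fun f => ?_).trans (Equiv.codRestrict (Fin (s+1)) {y : β | y ≠ x₀})
    simp only [Set.mem_range, not_exists, Set.mem_setOf_eq]
  have hβ : 1 ≤ Fintype.card β := Fintype.card_pos_iff.2 ⟨x₀⟩
  have hcompl : Fintype.card {f : Fin (s + 1) ↪ β // ¬ x₀ ∈ Set.range f} =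
      (Fintype.card β - 1).descFactorial (s + 1) := by
    rw [Fintype.card_congr e3, Fintype.card_embedding_eq, Fintype.card_fin]
    have h4 : Fintype.card {y : β // ¬ y = x₀} = Fintype.card β - 1 := by
      rw [Fintype.card_subtype_compl, Fintype.card_subtype_eq]
    rw [h4]
  have htot : Fintype.card (Fin (s + 1) ↪ β) = (Fintype.card β).descFactorial (s + 1) := by
    rw [Fintype.card_embedding_eq, Fintype.card_fin]
  have hsplit : Fintype.card {f : Fin (s + 1) ↪ β // x₀ ∈ Set.range f} +
      Fintype.card {f : Fin (s + 1) ↪ β // ¬ x₀ ∈ Set.range f} =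
      Fintype.card (Fin (s + 1) ↪ β) := by
    rw [Fintype.card_subtype_compl]
    have := Fintype.card_subtype_le (α := Fin (s+1) ↪ β) (fun f => x₀ ∈ Set.range f)
    omega
  rw [Nat.card_congr (e1.trans e2), Nat.card_eq_fintype_card]
  obtain ⟨m, hm⟩ : ∃ m, Fintype.card β = m + 1 := ⟨Fintype.card β - 1, by omega⟩
  rw [hm] at htot hcompl ⊢
  simp only [Nat.add_sub_cancel] at hcompl ⊢
  rw [← descFact_sub m s]
  omega

end counting
section assembly
open scoped Classical

lemma nat_card_sigma {ι : Type} [Fintype ι] (f : ι → Type) [∀ i, Fintype (f i)] :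
    Nat.card (Σ i, f i) = ∑ i, Nat.card (f i) := by
  simp [Nat.card_eq_fintype_card, Fintype.card_sigma]

lemma GS_rec (S : Set ℕ) (hS : ∀ s ∈ S, 0 < s) (n k : ℕ) (hn : 1 ≤ n) :
    srLah S 0 n (k + 1) = ∑ s ∈ (Finset.Icc 1 n).filter (· ∈ S),
      s * (n - 1).descFactorial (s - 1) * srLah S 0 (n - s) k := by
  set x₀ : Fin n := ⟨0, hn⟩ with hx₀def
  set p : List (Fin n) → Prop := fun l => l.Nodup ∧ x₀ ∈ l ∧ l.length ∈ S with hpdef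
  have hfin : {l : List (Fin n) | p l}.Finite := by
    apply (List.finite_length_le (Fin n) n).subset
    intro l hl
    simpa using hl.1.length_le_card
  haveI : Fintype {l : List (Fin n) // p l} := hfin.fintype
  haveI : ∀ (l : {l : List (Fin n) // p l}),
      Fintype ↥(GS S {x : Fin n // x ∉ l.1} k) := fun l => (GS_finite).fintype
  -- step 1 : main bijection
  have h1 : srLah S 0 n (k + 1) =
      ∑ l : {l : List (Fin n) // p l}, Nat.card ↥(GS S {x : Fin n // x ∉ l.1} k) := by
    rw [srLah_eq, card_GS_succ x₀, nat_card_sigma]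
  -- step 2 : identify each fiber card
  have h2 : ∀ l : {l : List (Fin n) // p l},
      Nat.card ↥(GS S {x : Fin n // x ∉ l.1} k) = srLah S 0 (n - l.1.length) k := by
    intro l
    have hcard : Fintype.card {x : Fin n // x ∉ l.1} = n - l.1.length := by
      have e' : {x : Fin n // x ∉ l.1} ≃ ↥(l.1.toFinsetᶜ) :=
        Equiv.subtypeEquivRight fun x => by simp
      rw [Fintype.card_congr e', Fintype.card_coe, Finset.card_compl,
        List.toFinset_card_of_nodup l.2.1, Fintype.card_fin]
    have e : {x : Fin n // x ∉ l.1} ≃ Fin (n - l.1.length) :=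
      Fintype.equivFinOfCardEq hcard
    rw [srLah_eq, card_GS_congr e]
  -- step 3 : sum over the finset of lists
  have h3 : srLah S 0 n (k + 1) = ∑ l ∈ hfin.toFinset, srLah S 0 (n - l.length) k := by
    rw [h1]
    rw [Finset.sum_congr rfl (fun l _ => h2 l)]
    exact (Finset.sum_subtype hfin.toFinset (fun l => hfin.mem_toFinset)
      (fun l => srLah S 0 (n - l.length) k)).symm
  -- step 4 : group by length
  rw [h3, Finset.sum_comp (fun s => srLah S 0 (n - s) k) List.length]
  -- step 5 : compare index sets
  have himg : hfin.toFinset.image List.length ⊆ (Finset.Icc 1 n).filter (· ∈ S) := by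
    intro s hs
    simp only [Finset.mem_image, Set.Finite.mem_toFinset] at hs
    obtain ⟨l, hl, rfl⟩ := hs
    simp only [Finset.mem_filter, Finset.mem_Icc]
    refine ⟨⟨?_, ?_⟩, hl.2.2⟩
    · exact List.length_pos_of_mem hl.2.1
    · simpa using hl.1.length_le_card
  rw [Finset.sum_subset himg]
  · apply Finset.sum_congr rfl
    intro s hs
    simp only [Finset.mem_filter, Finset.mem_Icc] at hs
    obtain ⟨⟨hs1, hsn⟩, hsS⟩ := hs
    obtain ⟨t, rfl⟩ : ∃ t, s = t + 1 := ⟨s - 1, by omega⟩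
    have hfilt : (hfin.toFinset.filter fun l => l.length = t + 1).card =
        Nat.card {l : List (Fin n) // l.Nodup ∧ x₀ ∈ l ∧ l.length = t + 1} := by
      rw [← Nat.card_eq_finsetCard]
      apply Nat.card_congr
      refine Equiv.subtypeEquivRight fun l => ?_
      simp only [Finset.mem_filter, Set.Finite.mem_toFinset, hpdef, Set.mem_setOf_eq]
      constructor
      · rintro ⟨⟨h1', h2', h3'⟩, h4'⟩; exact ⟨h1', h2', h4'⟩
      · rintro ⟨h1', h2', h4'⟩; exact ⟨⟨h1', h2', by rw [h4']; exact hsS⟩, h4'⟩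
    rw [smul_eq_mul, hfilt, card_lists x₀ t, Fintype.card_fin]
    simp
  · intro s hs hs'
    have : hfin.toFinset.filter (fun l => l.length = s) = ∅ := by
      rw [Finset.filter_eq_empty_iff]
      intro l hl hc
      exact hs' (Finset.mem_image.2 ⟨l, hl, hc⟩)
    rw [this]
    simp

end assembly

/-- the recurrence `L_S(n,k) = Σ_{s∈S} s·(n−1)_{s−1}·L_S(n−s,k−1)`. -/
theorem sLah_recurrence (S : Set ℕ) (hS : ∀ s ∈ S, 0 < s) (n k : ℕ)
    (hn : 1 ≤ n) (hk : 1 ≤ k) :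
    (srLah S 0 n k : ℤ) =
      ∑ᶠ s ∈ S, (s : ℤ) * ((n - 1).descFactorial (s - 1) : ℤ) *
        srLahZ S 0 ((n : ℤ) - s) ((k : ℤ) - 1) := by
  obtain ⟨k', rfl⟩ : ∃ k', k = k' + 1 := ⟨k - 1, by omega⟩
  set g : ℕ → ℤ := fun s => (s : ℤ) * ((n - 1).descFactorial (s - 1) : ℤ) *
      srLahZ S 0 ((n : ℤ) - s) (((k' + 1 : ℕ) : ℤ) - 1) with hg
  have hsupp : S ∩ Function.support g =
      ↑((Finset.Icc 1 n).filter (· ∈ S)) ∩ Function.support g := by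
    ext s
    simp only [Set.mem_inter_iff, Function.mem_support, Finset.coe_filter,
      Set.mem_setOf_eq, Finset.mem_Icc]
    constructor
    · rintro ⟨hsS, hg0⟩
      refine ⟨⟨⟨hS s hsS, ?_⟩, hsS⟩, hg0⟩
      by_contra hc
      apply hg0
      have hz : (n - 1).descFactorial (s - 1) = 0 :=
        Nat.descFactorial_eq_zero_iff_lt.2 (by omega)
      simp [hg, hz]
    · rintro ⟨⟨_, hsS⟩, hg0⟩; exact ⟨hsS, hg0⟩
  rw [finsum_mem_eq_sum_of_inter_support_eq g hsupp, GS_rec S hS n k' hn, Nat.cast_sum]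
  apply Finset.sum_congr rfl
  intro s hs
  simp only [Finset.mem_filter, Finset.mem_Icc] at hs
  obtain ⟨⟨hs1, hsn⟩, hsS⟩ := hs
  have e1 : ((n : ℤ) - s).toNat = n - s := by omega
  have e2 : ((((k' + 1 : ℕ)) : ℤ) - 1).toNat = k' := by push_cast; omega
  have h1 : srLahZ S 0 ((n : ℤ) - s) (((k' + 1 : ℕ) : ℤ) - 1) =
      (srLah S 0 (n - s) k' : ℤ) := by
    rw [srLahZ, if_pos ⟨by omega, by push_cast; omega⟩, e1, e2]
  rw [hg]
  simp only []
  rw [h1]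
  push_cast
  ring
end

section
/- Let S be a set of positive integers, let S* = {s ∈ S : s−1 ∉ S} and S̄ = {s ∈ S : s+1 ∉ S}. Then for all integers n ≥ 1 and k ≥ 1, as an identity of integers, L_S(n,k) = (n+k−1)·L_S(n−1,k) + Σ_{s∈S*} C(n−1, s−1)·s!·L_S(n−s, k−1) − Σ_{s∈S̄} C(n−1, s)·(s+1)!·L_S(n−s−1, k−1), where both sums have only finitely many nonzero terms. -/
open Finset
open scoped Classical

namespace SLahAux

variable {N M : ℕ}

/-- Partition of a finset `A` into nonempty nodup lists with entries in `A`. -/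
def IsLPOn (A : Finset (Fin N)) (P : Finset (List (Fin N))) : Prop :=
  (∀ l ∈ P, l ≠ [] ∧ l.Nodup ∧ ∀ x ∈ l, x ∈ A) ∧ ∀ x ∈ A, ∃! l, l ∈ P ∧ x ∈ l

/-- All nodup lists with entries in `A`. -/
noncomputable def allLists (A : Finset (Fin N)) : Finset (List (Fin N)) :=
  A.powerset.biUnion fun B => ((B.sort (· ≤ ·)).permutations).toFinset

lemma mem_allLists {A : Finset (Fin N)} {l : List (Fin N)} :
    l ∈ allLists A ↔ l.Nodup ∧ ∀ x ∈ l, x ∈ A := by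
  simp only [allLists, mem_biUnion, Finset.mem_powerset, List.mem_toFinset,
    List.mem_permutations]
  constructor
  · rintro ⟨B, hBA, hperm⟩
    refine ⟨hperm.nodup_iff.mpr (B.sort_nodup _), fun x hx => hBA ?_⟩
    have := hperm.mem_iff.mp hx
    rwa [Finset.mem_sort] at this
  · rintro ⟨hnd, hA⟩
    refine ⟨l.toFinset, fun x hx => hA x (List.mem_toFinset.mp hx), ?_⟩
    rw [List.perm_ext_iff_of_nodup hnd (Finset.sort_nodup _ _)]
    intro a
    rw [Finset.mem_sort, List.mem_toFinset]

/-- The partitions of `A` into `k` lists with lengths in `S`, as a finset. -/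
noncomputable def LP (S : Set ℕ) (A : Finset (Fin N)) (k : ℕ) :
    Finset (Finset (List (Fin N))) :=
  (allLists A).powerset.filter fun P => IsLPOn A P ∧ P.card = k ∧ ∀ l ∈ P, l.length ∈ S

lemma mem_LP {S : Set ℕ} {A : Finset (Fin N)} {k : ℕ} {P : Finset (List (Fin N))} :
    P ∈ LP S A k ↔ IsLPOn A P ∧ P.card = k ∧ ∀ l ∈ P, l.length ∈ S := by
  simp only [LP, Finset.mem_filter, Finset.mem_powerset, and_iff_right_iff_imp]
  intro h l hl
  exact mem_allLists.mpr ⟨(h.1.1 l hl).2.1, (h.1.1 l hl).2.2⟩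

lemma srLah_eq_card (S : Set ℕ) (n k : ℕ) :
    srLah S 0 n k = (LP S (Finset.univ : Finset (Fin n)) k).card := by
  have hset : srLahSet S 0 n k = ↑(LP S (Finset.univ : Finset (Fin (n + 0))) k) := by
    ext P
    simp only [srLahSet, Set.mem_setOf_eq, Finset.mem_coe, mem_LP, IsListPartition, IsLPOn]
    constructor
    · rintro ⟨⟨h1, h2⟩, hc, hlen, -⟩
      exact ⟨⟨fun l hl => ⟨(h1 l hl).1, (h1 l hl).2, fun x _ => Finset.mem_univ x⟩,
        fun x _ => h2 x⟩, by simpa using hc, hlen⟩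
    · rintro ⟨⟨h1, h2⟩, hc, hlen⟩
      refine ⟨⟨fun l hl => ⟨(h1 l hl).1, (h1 l hl).2.1⟩, fun x => h2 x (Finset.mem_univ x)⟩,
        by simpa using hc, hlen, ?_⟩
      intro i j hi
      simp at hi
  rw [srLah, hset, Nat.card_coe_set_eq, Set.ncard_coe_finset]

lemma LP_card_empty (S : Set ℕ) (k : ℕ) :
    (LP S (∅ : Finset (Fin N)) k).card = if k = 0 then 1 else 0 := by
  have h : ∀ P ∈ LP S (∅ : Finset (Fin N)) k, P = (∅ : Finset (List (Fin N))) := by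
    intro P hP
    rw [mem_LP] at hP
    ext l
    simp only [Finset.notMem_empty, iff_false]
    intro hl
    obtain ⟨h1, h2, h3⟩ := hP.1.1 l hl
    obtain ⟨x, hx⟩ := List.exists_mem_of_ne_nil l h1
    exact absurd (h3 x hx) (Finset.notMem_empty x)
  by_cases hk : k = 0
  · subst hk
    rw [if_pos rfl, Finset.card_eq_one]
    refine ⟨∅, ?_⟩
    ext P
    rw [mem_LP, Finset.mem_singleton]
    constructor
    · intro hP; exact h P (mem_LP.mpr hP)
    · rintro rfl
      refine ⟨⟨by simp, by simp⟩, by simp, by simp⟩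
  · rw [if_neg hk, Finset.card_eq_zero]
    ext P
    simp only [Finset.notMem_empty, iff_false]
    intro hP
    have := h P hP
    subst this
    rw [mem_LP] at hP
    exact hk (hP.2.1.symm ▸ rfl)


section transport
variable {A : Finset (Fin N)} {B : Finset (Fin M)} {g : Fin N → Fin M} {h : Fin M → Fin N}

lemma map_map_id (hgh : ∀ x ∈ A, h (g x) = x) {l : List (Fin N)} (hlA : ∀ x ∈ l, x ∈ A) :
    (l.map g).map h = l := by
  rw [List.map_map]
  conv_rhs => rw [← List.map_id l]
  exact List.map_congr_left fun x hx => hgh x (hlA x hx)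

lemma lp_image (hg : ∀ x ∈ A, g x ∈ B) (hgh : ∀ x ∈ A, h (g x) = x)
    (hh : ∀ y ∈ B, h y ∈ A) (hhg : ∀ y ∈ B, g (h y) = y)
    {P : Finset (List (Fin N))} (hP : IsLPOn A P) :
    IsLPOn B (P.image (List.map g)) := by
  obtain ⟨hmem, huniq⟩ := hP
  constructor
  · intro l' hl'
    obtain ⟨l, hl, rfl⟩ := Finset.mem_image.mp hl'
    obtain ⟨h1, h2, h3⟩ := hmem l hl
    refine ⟨by simpa using h1, h2.map_on (fun x hx y hy hxy => ?_), ?_⟩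
    · rw [← hgh x (h3 x hx), hxy, hgh y (h3 y hy)]
    · intro y hy
      obtain ⟨x, hx, rfl⟩ := List.mem_map.mp hy
      exact hg x (h3 x hx)
  · intro y hy
    obtain ⟨l, ⟨hlP, hxl⟩, hun⟩ := huniq (h y) (hh y hy)
    refine ⟨l.map g, ⟨Finset.mem_image_of_mem _ hlP, ?_⟩, ?_⟩
    · have : g (h y) ∈ l.map g := List.mem_map_of_mem hxl
      rwa [hhg y hy] at this
    · rintro l' ⟨hl'P, hyl'⟩
      obtain ⟨l₀, hl₀, rfl⟩ := Finset.mem_image.mp hl'P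
      obtain ⟨x₀, hx₀, rfl⟩ := List.mem_map.mp hyl'
      have hx₀A : x₀ ∈ A := (hmem l₀ hl₀).2.2 x₀ hx₀
      have : l₀ = l := hun l₀ ⟨hl₀, by rwa [hgh x₀ hx₀A]⟩
      rw [this]

lemma lp_image_mem (S : Set ℕ) (k : ℕ)
    (hg : ∀ x ∈ A, g x ∈ B) (hgh : ∀ x ∈ A, h (g x) = x)
    (hh : ∀ y ∈ B, h y ∈ A) (hhg : ∀ y ∈ B, g (h y) = y)
    (P : Finset (List (Fin N))) (hP : P ∈ LP S A k) :
    P.image (List.map g) ∈ LP S B k ∧ (P.image (List.map g)).image (List.map h) = P := by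
  rw [mem_LP] at hP
  obtain ⟨hlp, hcard, hlen⟩ := hP
  have hinv : ∀ l ∈ P, (l.map g).map h = l := fun l hl =>
    map_map_id hgh (hlp.1 l hl).2.2
  have himg : (P.image (List.map g)).image (List.map h) = P := by
    rw [Finset.image_image]
    calc P.image (List.map h ∘ List.map g) = P.image id :=
          Finset.image_congr (fun l hl => hinv l hl)
      _ = P := Finset.image_id
  refine ⟨mem_LP.mpr ⟨lp_image hg hgh hh hhg hlp, ?_, ?_⟩, himg⟩
  · rw [Finset.card_image_of_injOn, hcard]
    intro l₁ h₁ l₂ h₂ he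
    rw [← hinv l₁ h₁, he, hinv l₂ h₂]
  · intro l' hl'
    obtain ⟨l, hl, rfl⟩ := Finset.mem_image.mp hl'
    rw [List.length_map]; exact hlen l hl

lemma card_LP_transport (S : Set ℕ) (k : ℕ)
    (hg : ∀ x ∈ A, g x ∈ B) (hgh : ∀ x ∈ A, h (g x) = x)
    (hh : ∀ y ∈ B, h y ∈ A) (hhg : ∀ y ∈ B, g (h y) = y) :
    (LP S A k).card = (LP S B k).card :=
  Finset.card_nbij' (fun P => P.image (List.map g)) (fun Q => Q.image (List.map h))
    (fun P hP => (lp_image_mem S k hg hgh hh hhg P hP).1)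
    (fun Q hQ => (lp_image_mem S k hh hhg hg hgh Q hQ).1)
    (fun P hP => (lp_image_mem S k hg hgh hh hhg P hP).2)
    (fun Q hQ => (lp_image_mem S k hh hhg hg hgh Q hQ).2)

end transport

lemma LP_card_eq_srLah (S : Set ℕ) (A : Finset (Fin N)) (k : ℕ) :
    (LP S A k).card = srLah S 0 A.card k := by
  rcases Finset.eq_empty_or_nonempty A with rfl | ⟨a, ha⟩
  · rw [LP_card_empty, srLah_eq_card, Finset.card_empty]
    have huniv : (Finset.univ : Finset (Fin 0)) = ∅ := rfl
    rw [huniv, LP_card_empty]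
  · rw [srLah_eq_card]
    have hpos : 0 < A.card := Finset.card_pos.mpr ⟨a, ha⟩
    have hcA : A.card = A.card := rfl
    set e := A.orderIsoOfFin hcA with he
    refine card_LP_transport S k
      (g := fun x => if hx : x ∈ A then e.symm ⟨x, hx⟩ else ⟨0, hpos⟩)
      (h := fun y => (e y : Fin N)) ?_ ?_ ?_ ?_
    · intro x _; exact Finset.mem_univ _
    · intro x hx
      simp only [dif_pos hx]
      rw [OrderIso.apply_symm_apply]
    · intro y _; exact (e y).2
    · intro y _
      have hmem : (e y : Fin N) ∈ A := (e y).2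
      simp only [dif_pos hmem]
      rw [show (⟨(e y : Fin N), hmem⟩ : {x // x ∈ A}) = e y from Subtype.ext rfl,
        OrderIso.symm_apply_apply]


lemma card_LP_filter_mem (S : Set ℕ) (A : Finset (Fin N)) (k : ℕ) (l : List (Fin N))
    (hl : l ≠ []) (hnd : l.Nodup) (hlA : ∀ x ∈ l, x ∈ A) (hlen : l.length ∈ S) :
    ((LP S A (k + 1)).filter (fun P => l ∈ P)).card = (LP S (A \ l.toFinset) k).card := by
  refine Finset.card_nbij' (fun P => P.erase l) (fun Q => insert l Q) ?_ ?_ ?_ ?_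
  · intro P hP
    rw [Finset.mem_coe, Finset.mem_filter, mem_LP] at hP
    obtain ⟨⟨⟨hmem, huniq⟩, hcard, hS⟩, hlP⟩ := hP
    rw [Finset.mem_coe, mem_LP]
    refine ⟨⟨?_, ?_⟩, ?_, ?_⟩
    · intro l' hl'
      have hl'P := Finset.mem_of_mem_erase hl'
      have hne := Finset.ne_of_mem_erase hl'
      obtain ⟨h1, h2, h3⟩ := hmem l' hl'P
      refine ⟨h1, h2, fun x hx => ?_⟩
      rw [Finset.mem_sdiff]
      refine ⟨h3 x hx, fun hxl => ?_⟩
      rw [List.mem_toFinset] at hxl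
      obtain ⟨l₀, -, hun⟩ := huniq x (h3 x hx)
      exact hne ((hun l' ⟨hl'P, hx⟩).trans (hun l ⟨hlP, hxl⟩).symm)
    · intro x hx
      rw [Finset.mem_sdiff, List.mem_toFinset] at hx
      obtain ⟨l₀, ⟨hl₀P, hxl₀⟩, hun⟩ := huniq x hx.1
      have hne : l₀ ≠ l := fun hEq => hx.2 (hEq ▸ hxl₀)
      refine ⟨l₀, ⟨Finset.mem_erase.mpr ⟨hne, hl₀P⟩, hxl₀⟩, ?_⟩
      rintro l' ⟨hl', hxl'⟩
      exact hun l' ⟨Finset.mem_of_mem_erase hl', hxl'⟩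
    · rw [Finset.card_erase_of_mem hlP, hcard]; rfl
    · intro l' hl'
      exact hS l' (Finset.mem_of_mem_erase hl')
  · intro Q hQ
    rw [Finset.mem_coe, mem_LP] at hQ
    obtain ⟨⟨hmem, huniq⟩, hcard, hS⟩ := hQ
    have hlQ : l ∉ Q := by
      intro hlQ
      obtain ⟨x, hx⟩ := List.exists_mem_of_ne_nil l hl
      have := (hmem l hlQ).2.2 x hx
      rw [Finset.mem_sdiff, List.mem_toFinset] at this
      exact this.2 hx
    rw [Finset.mem_coe, Finset.mem_filter, mem_LP]
    refine ⟨⟨⟨?_, ?_⟩, ?_, ?_⟩, Finset.mem_insert_self l Q⟩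
    · intro l' hl'
      rcases Finset.mem_insert.mp hl' with rfl | hl'Q
      · exact ⟨hl, hnd, hlA⟩
      · obtain ⟨h1, h2, h3⟩ := hmem l' hl'Q
        exact ⟨h1, h2, fun x hx => (Finset.mem_sdiff.mp (h3 x hx)).1⟩
    · intro x hx
      by_cases hxl : x ∈ l
      · refine ⟨l, ⟨Finset.mem_insert_self l Q, hxl⟩, ?_⟩
        rintro l' ⟨hl', hxl'⟩
        rcases Finset.mem_insert.mp hl' with rfl | hl'Q
        · rfl
        · have := (hmem l' hl'Q).2.2 x hxl'
          rw [Finset.mem_sdiff, List.mem_toFinset] at this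
          exact absurd hxl this.2
      · obtain ⟨l₀, ⟨hl₀Q, hxl₀⟩, hun⟩ := huniq x
          (Finset.mem_sdiff.mpr ⟨hx, fun hh => hxl (List.mem_toFinset.mp hh)⟩)
        refine ⟨l₀, ⟨Finset.mem_insert_of_mem hl₀Q, hxl₀⟩, ?_⟩
        rintro l' ⟨hl', hxl'⟩
        rcases Finset.mem_insert.mp hl' with rfl | hl'Q
        · exact absurd hxl' hxl
        · exact hun l' ⟨hl'Q, hxl'⟩
    · rw [Finset.card_insert_of_notMem hlQ, hcard]
    · intro l' hl'
      rcases Finset.mem_insert.mp hl' with rfl | hl'Q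
      · exact hlen
      · exact hS l' hl'Q
  · intro P hP
    rw [Finset.mem_coe, Finset.mem_filter] at hP
    exact Finset.insert_erase hP.2
  · intro Q hQ
    rw [Finset.mem_coe, mem_LP] at hQ
    have hlQ : l ∉ Q := by
      intro hlQ
      obtain ⟨x, hx⟩ := List.exists_mem_of_ne_nil l hl
      have := (hQ.1.1 l hlQ).2.2 x hx
      rw [Finset.mem_sdiff, List.mem_toFinset] at this
      exact this.2 hx
    exact Finset.erase_insert hlQ


lemma LP_subset_allLists {S : Set ℕ} {A : Finset (Fin N)} {k : ℕ} {P : Finset (List (Fin N))}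
    (hP : P ∈ LP S A k) : P ⊆ allLists A :=
  Finset.mem_powerset.mp (Finset.mem_filter.mp hP).1

lemma card_allLists_filter_len (A : Finset (Fin N)) (s : ℕ) :
    ((allLists A).filter (fun l => l.length = s)).card = A.card.choose s * s.factorial := by
  have hmaps : ∀ l ∈ (allLists A).filter (fun l => l.length = s),
      l.toFinset ∈ A.powersetCard s := by
    intro l hl
    rw [Finset.mem_filter, mem_allLists] at hl
    rw [Finset.mem_powersetCard]
    exact ⟨fun x hx => hl.1.2 x (List.mem_toFinset.mp hx),
      by rw [List.toFinset_card_of_nodup hl.1.1, hl.2]⟩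
  rw [Finset.card_eq_sum_card_fiberwise hmaps]
  have hfib : ∀ B ∈ A.powersetCard s,
      {l ∈ (allLists A).filter (fun l => l.length = s) | l.toFinset = B}.card
        = s.factorial := by
    intro B hB
    rw [Finset.mem_powersetCard] at hB
    have hfibeq : {l ∈ (allLists A).filter (fun l => l.length = s) | l.toFinset = B}
        = ((B.sort (· ≤ ·)).permutations).toFinset := by
      ext l
      simp only [Finset.mem_filter, mem_allLists, List.mem_toFinset, List.mem_permutations]
      constructor
      · rintro ⟨⟨⟨hnd, -⟩, -⟩, hBf⟩
        rw [List.perm_ext_iff_of_nodup hnd (Finset.sort_nodup _ _)]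
        intro x
        rw [Finset.mem_sort, ← hBf, List.mem_toFinset]
      · intro hperm
        have hnd : l.Nodup := hperm.nodup_iff.mpr (Finset.sort_nodup _ _)
        have hmem : ∀ x, x ∈ l ↔ x ∈ B := by
          intro x
          rw [hperm.mem_iff, Finset.mem_sort]
        refine ⟨⟨⟨hnd, fun x hx => hB.1 ((hmem x).mp hx)⟩, ?_⟩, ?_⟩
        · rw [hperm.length_eq, Finset.length_sort, hB.2]
        · ext x; rw [List.mem_toFinset, hmem]
    rw [hfibeq, List.toFinset_card_of_nodup
      (List.nodup_permutations _ (Finset.sort_nodup _ _)), List.length_permutations,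
      Finset.length_sort, hB.2]
  rw [Finset.sum_congr rfl hfib, Finset.sum_const, Finset.card_powersetCard, smul_eq_mul]

lemma card_allLists_filter_len_mem (A : Finset (Fin N)) (a : Fin N) (ha : a ∈ A)
    {s : ℕ} (hs : 1 ≤ s) :
    ((allLists A).filter (fun l => l.length = s ∧ a ∈ l)).card
      = (A.card - 1).choose (s - 1) * s.factorial := by
  have hnotmem : ((allLists A).filter (fun l => l.length = s ∧ a ∉ l))
      = (allLists (A.erase a)).filter (fun l => l.length = s) := by
    ext l
    simp only [Finset.mem_filter, mem_allLists, Finset.mem_erase]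
    constructor
    · rintro ⟨⟨hnd, hA⟩, hlen, hal⟩
      exact ⟨⟨hnd, fun x hx => ⟨fun hh => hal (hh ▸ hx), hA x hx⟩⟩, hlen⟩
    · rintro ⟨⟨hnd, hA⟩, hlen⟩
      exact ⟨⟨hnd, fun x hx => (hA x hx).2⟩, hlen, fun hal => (hA a hal).1 rfl⟩
  have hsplit : ((allLists A).filter (fun l => l.length = s ∧ a ∈ l)).card
      + ((allLists A).filter (fun l => l.length = s ∧ a ∉ l)).card
      = ((allLists A).filter (fun l => l.length = s)).card := by
    rw [← Finset.filter_filter, ← Finset.filter_filter (fun l : List (Fin N) => l.length = s)]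
    exact Finset.card_filter_add_card_filter_not _
  rw [hnotmem, card_allLists_filter_len, Finset.card_erase_of_mem ha,
    card_allLists_filter_len] at hsplit
  obtain ⟨m, hm⟩ : ∃ m, A.card = m + 1 :=
    ⟨A.card - 1, (Nat.succ_pred_eq_of_pos (Finset.card_pos.mpr ⟨a, ha⟩)).symm⟩
  obtain ⟨t, rfl⟩ : ∃ t, s = t + 1 := ⟨s - 1, (Nat.succ_pred_eq_of_pos hs).symm⟩
  rw [hm] at hsplit ⊢
  simp only [Nat.add_sub_cancel] at hsplit ⊢
  have hch : (m + 1).choose (t + 1) = m.choose t + m.choose (t + 1) :=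
    Nat.choose_succ_succ m t
  rw [hch, Nat.add_mul] at hsplit
  omega

lemma fiber_empty (S : Set ℕ) (A : Finset (Fin N)) (k : ℕ) {l : List (Fin N)}
    (hlen : l.length ∉ S) :
    (LP S A k).filter (fun P => l ∈ P) = ∅ := by
  ext P
  simp only [Finset.mem_filter, Finset.notMem_empty, iff_false, not_and]
  intro hP hl
  exact hlen ((mem_LP.mp hP).2.2 l hl)

lemma sum_filter_card_eq (S : Set ℕ) (A : Finset (Fin N)) (k : ℕ)
    (pr : List (Fin N) → Prop) [DecidablePred pr] :
    (∑ P ∈ LP S A k, (P.filter pr).card)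
      = ∑ l ∈ (allLists A).filter pr, ((LP S A k).filter (fun P => l ∈ P)).card := by
  calc (∑ P ∈ LP S A k, (P.filter pr).card)
      = ∑ P ∈ LP S A k, ∑ l ∈ allLists A, (if l ∈ P ∧ pr l then 1 else 0) := by
        refine Finset.sum_congr rfl fun P hP => ?_
        calc (P.filter pr).card = ∑ l ∈ P, (if pr l then 1 else 0) := Finset.card_filter _ _
          _ = ∑ l ∈ P, (if l ∈ P ∧ pr l then 1 else 0) :=
              Finset.sum_congr rfl fun l hl => by simp [hl]
          _ = ∑ l ∈ allLists A, (if l ∈ P ∧ pr l then 1 else 0) :=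
              Finset.sum_subset (LP_subset_allLists hP) (fun l _ hlP => by simp [hlP])
    _ = ∑ l ∈ allLists A, ∑ P ∈ LP S A k, (if l ∈ P ∧ pr l then 1 else 0) := Finset.sum_comm
    _ = ∑ l ∈ allLists A, (if pr l then ∑ P ∈ LP S A k, (if l ∈ P then 1 else 0) else 0) := by
        refine Finset.sum_congr rfl fun l _ => ?_
        by_cases h : pr l <;> simp [h]
    _ = ∑ l ∈ (allLists A).filter pr, ∑ P ∈ LP S A k, (if l ∈ P then 1 else 0) :=
        (Finset.sum_filter _ _).symm
    _ = ∑ l ∈ (allLists A).filter pr, ((LP S A k).filter (fun P => l ∈ P)).card :=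
        Finset.sum_congr rfl fun l _ => (Finset.card_filter _ _).symm

lemma marked_sum (S : Set ℕ) (hS : ∀ s ∈ S, 0 < s) (A : Finset (Fin N)) (k s : ℕ) :
    (∑ P ∈ LP S A (k + 1), (P.filter (fun l => l.length = s)).card)
      = if s ∈ S then A.card.choose s * s.factorial * srLah S 0 (A.card - s) k else 0 := by
  rw [sum_filter_card_eq]
  by_cases hsS : s ∈ S
  · rw [if_pos hsS]
    have hfib : ∀ l ∈ (allLists A).filter (fun l => l.length = s),
        ((LP S A (k + 1)).filter (fun P => l ∈ P)).card = srLah S 0 (A.card - s) k := by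
      intro l hl
      rw [Finset.mem_filter, mem_allLists] at hl
      obtain ⟨⟨hnd, hlA⟩, hlen⟩ := hl
      have hne : l ≠ [] := by
        intro hcon
        have := hS s hsS
        rw [hcon] at hlen
        simp at hlen
        omega
      rw [card_LP_filter_mem S A k l hne hnd hlA (hlen ▸ hsS), LP_card_eq_srLah]
      congr 1
      rw [Finset.card_sdiff_of_subset (fun x hx => hlA x (List.mem_toFinset.mp hx)),
        List.toFinset_card_of_nodup hnd, hlen]
    rw [Finset.sum_congr rfl hfib, Finset.sum_const, card_allLists_filter_len, smul_eq_mul]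
  · rw [if_neg hsS]
    refine Finset.sum_eq_zero fun l hl => ?_
    rw [Finset.mem_filter] at hl
    rw [fiber_empty S A (k + 1) (hl.2 ▸ hsS), Finset.card_empty]


lemma length_le_card {A : Finset (Fin N)} {l : List (Fin N)} (hnd : l.Nodup)
    (hlA : ∀ x ∈ l, x ∈ A) : l.length ≤ A.card := by
  rw [← List.toFinset_card_of_nodup hnd]
  exact Finset.card_le_card (fun x hx => hlA x (List.mem_toFinset.mp hx))

lemma LP_card_succ (S : Set ℕ) (hS : ∀ s ∈ S, 0 < s) (A : Finset (Fin N)) (a : Fin N)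
    (ha : a ∈ A) (k : ℕ) :
    (LP S A (k + 1)).card = ∑ s ∈ Finset.range (A.card + 1),
      (if s ∈ S then (A.card - 1).choose (s - 1) * s.factorial * srLah S 0 (A.card - s) k
       else 0) := by
  classical
  set T := (allLists A).filter (fun l => a ∈ l ∧ l.length ∈ S) with hT
  set f : Finset (List (Fin N)) → List (Fin N) :=
    fun P => if h : ∃! l, l ∈ P ∧ a ∈ l then Finset.choose _ P h else [] with hf
  have hex : ∀ P ∈ LP S A (k + 1), ∃! l, l ∈ P ∧ a ∈ l := by
    intro P hP
    exact (mem_LP.mp hP).1.2 a ha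
  have hfP : ∀ P ∈ LP S A (k + 1), f P ∈ P ∧ a ∈ f P := by
    intro P hP
    rw [hf]
    simp only [dif_pos (hex P hP)]
    exact ⟨Finset.choose_mem _ _ _, Finset.choose_property _ _ _⟩
  have hmaps : ∀ P ∈ LP S A (k + 1), f P ∈ T := by
    intro P hP
    obtain ⟨hfPP, hafP⟩ := hfP P hP
    rw [hT, Finset.mem_filter]
    exact ⟨LP_subset_allLists hP hfPP, hafP, (mem_LP.mp hP).2.2 _ hfPP⟩
  rw [Finset.card_eq_sum_card_fiberwise hmaps]
  have hfib : ∀ l ∈ T, {P ∈ LP S A (k + 1) | f P = l}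
      = (LP S A (k + 1)).filter (fun P => l ∈ P) := by
    intro l hl
    rw [hT, Finset.mem_filter] at hl
    obtain ⟨hlall, hal, hlenS⟩ := hl
    ext P
    simp only [Finset.mem_filter]
    constructor
    · rintro ⟨hP, rfl⟩
      exact ⟨hP, (hfP P hP).1⟩
    · rintro ⟨hP, hlP⟩
      obtain ⟨l₀, hl₀, hun⟩ := hex P hP
      exact ⟨hP, (hun _ ⟨(hfP P hP).1, (hfP P hP).2⟩).trans (hun _ ⟨hlP, hal⟩).symm⟩
  have hfibcard : ∀ l ∈ T, {P ∈ LP S A (k + 1) | f P = l}.card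
      = srLah S 0 (A.card - l.length) k := by
    intro l hl
    rw [hfib l hl]
    rw [hT, Finset.mem_filter, mem_allLists] at hl
    obtain ⟨⟨hnd, hlA⟩, hal, hlenS⟩ := hl
    have hne : l ≠ [] := fun hc => by simp [hc] at hal
    rw [card_LP_filter_mem S A k l hne hnd hlA hlenS, LP_card_eq_srLah]
    congr 1
    rw [Finset.card_sdiff_of_subset (fun x hx => hlA x (List.mem_toFinset.mp hx)),
      List.toFinset_card_of_nodup hnd]
  rw [Finset.sum_congr rfl hfibcard]
  have hmaps2 : ∀ l ∈ T, l.length ∈ Finset.range (A.card + 1) := by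
    intro l hl
    rw [hT, Finset.mem_filter, mem_allLists] at hl
    rw [Finset.mem_range, Nat.lt_succ_iff]
    exact length_le_card hl.1.1 hl.1.2
  rw [← Finset.sum_fiberwise_of_maps_to hmaps2 (fun l => srLah S 0 (A.card - l.length) k)]
  refine Finset.sum_congr rfl fun s hs => ?_
  have hinner : ∀ l ∈ T.filter (fun l => l.length = s),
      srLah S 0 (A.card - l.length) k = srLah S 0 (A.card - s) k := by
    intro l hl
    rw [(Finset.mem_filter.mp hl).2]
  rw [Finset.sum_congr rfl hinner, Finset.sum_const, smul_eq_mul]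
  by_cases hsS : s ∈ S
  · rw [if_pos hsS]
    have hTfil : T.filter (fun l => l.length = s)
        = (allLists A).filter (fun l => l.length = s ∧ a ∈ l) := by
      rw [hT, Finset.filter_filter]
      ext l
      simp only [Finset.mem_filter]
      constructor
      · rintro ⟨h1, ⟨h2, h3⟩, h4⟩
        exact ⟨h1, h4, h2⟩
      · rintro ⟨h1, h2, h3⟩
        exact ⟨h1, ⟨h3, h2 ▸ hsS⟩, h2⟩
    rw [hTfil, card_allLists_filter_len_mem A a ha (hS s hsS)]
  · rw [if_neg hsS]
    have hTfil : T.filter (fun l => l.length = s) = ∅ := by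
      ext l
      rw [hT, Finset.filter_filter]
      simp only [Finset.mem_filter, Finset.notMem_empty, iff_false, not_and]
      rintro - ⟨-, hlenS⟩ hlen
      exact hsS (hlen ▸ hlenS)
    rw [hTfil, Finset.card_empty, Nat.zero_mul]

lemma sum_lengths {S : Set ℕ} {A : Finset (Fin N)} {k : ℕ} {P : Finset (List (Fin N))}
    (hP : P ∈ LP S A k) : ∑ l ∈ P, l.length = A.card := by
  rw [mem_LP] at hP
  obtain ⟨⟨hmem, huniq⟩, hcard, -⟩ := hP
  have hA : A = P.biUnion List.toFinset := by
    ext x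
    simp only [Finset.mem_biUnion, List.mem_toFinset]
    constructor
    · intro hx
      obtain ⟨l, ⟨hlP, hxl⟩, -⟩ := huniq x hx
      exact ⟨l, hlP, hxl⟩
    · rintro ⟨l, hlP, hxl⟩
      exact (hmem l hlP).2.2 x hxl
  have hdisj : ∀ l₁ ∈ P, ∀ l₂ ∈ P, l₁ ≠ l₂ → Disjoint l₁.toFinset l₂.toFinset := by
    intro l₁ h₁ l₂ h₂ hne
    rw [Finset.disjoint_left]
    intro x hx₁ hx₂
    rw [List.mem_toFinset] at hx₁ hx₂
    have hxA : x ∈ A := (hmem l₁ h₁).2.2 x hx₁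
    obtain ⟨l₀, -, hun⟩ := huniq x hxA
    exact hne ((hun l₁ ⟨h₁, hx₁⟩).trans (hun l₂ ⟨h₂, hx₂⟩).symm)
  rw [hA, Finset.card_biUnion hdisj]
  exact Finset.sum_congr rfl fun l hl =>
    (List.toFinset_card_of_nodup (hmem l hl).2.1).symm

lemma LP_slot_identity (S : Set ℕ) (hS : ∀ s ∈ S, 0 < s) (A : Finset (Fin N)) (k : ℕ) :
    (A.card + (k + 1)) * (LP S A (k + 1)).card
      = ∑ s ∈ Finset.range (A.card + 1), (s + 1) *
          (if s ∈ S then A.card.choose s * s.factorial * srLah S 0 (A.card - s) k else 0) := by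
  classical
  have hLHS : (A.card + (k + 1)) * (LP S A (k + 1)).card
      = ∑ P ∈ LP S A (k + 1), ∑ l ∈ P, (l.length + 1) := by
    rw [mul_comm, Finset.card_eq_sum_ones (LP S A (k + 1)), Finset.sum_mul]
    refine Finset.sum_congr rfl fun P hP => ?_
    rw [Finset.sum_add_distrib, sum_lengths hP, Finset.sum_const, smul_eq_mul, mul_one,
      one_mul, (mem_LP.mp hP).2.1]
  rw [hLHS]
  have hswap : ∀ P ∈ LP S A (k + 1), ∑ l ∈ P, (l.length + 1)
      = ∑ s ∈ Finset.range (A.card + 1), (s + 1) * (P.filter (fun l => l.length = s)).card := by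
    intro P hP
    have hmaps : ∀ l ∈ P, l.length ∈ Finset.range (A.card + 1) := by
      intro l hl
      rw [Finset.mem_range, Nat.lt_succ_iff]
      exact length_le_card ((mem_LP.mp hP).1.1 l hl).2.1
        (fun x hx => ((mem_LP.mp hP).1.1 l hl).2.2 x hx)
    rw [← Finset.sum_fiberwise_of_maps_to hmaps (fun l => l.length + 1)]
    refine Finset.sum_congr rfl fun s hs => ?_
    have : ∀ l ∈ P.filter (fun l => l.length = s), l.length + 1 = s + 1 := by
      intro l hl
      rw [(Finset.mem_filter.mp hl).2]
    rw [Finset.sum_congr rfl this, Finset.sum_const, smul_eq_mul, mul_comm]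
  rw [Finset.sum_congr rfl hswap, Finset.sum_comm]
  refine Finset.sum_congr rfl fun s hs => ?_
  rw [← Finset.mul_sum, marked_sum S hS A k s]


lemma srLahZ_coe (S : Set ℕ) (a b : ℕ) : srLahZ S 0 (a : ℤ) (b : ℤ) = srLah S 0 a b := by
  rw [srLahZ, if_pos ⟨Int.natCast_nonneg a, Int.natCast_nonneg b⟩, Int.toNat_natCast,
    Int.toNat_natCast]

end SLahAux

open SLahAux

/-- recurrence for the S-Lah numbers via the sets `S*` and `S̄`. -/
theorem sLah_recurrence_star_bar (S : Set ℕ) (hS : ∀ s ∈ S, 0 < s) (n k : ℕ)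
    (hn : 1 ≤ n) (hk : 1 ≤ k) :
    (srLah S 0 n k : ℤ) =
      ((n : ℤ) + k - 1) * srLahZ S 0 ((n : ℤ) - 1) k +
      (∑ᶠ s ∈ {s ∈ S | s - 1 ∉ S}, ((n - 1).choose (s - 1) : ℤ) * (s.factorial : ℤ) *
        srLahZ S 0 ((n : ℤ) - s) ((k : ℤ) - 1)) -
      ∑ᶠ s ∈ {s ∈ S | s + 1 ∉ S}, ((n - 1).choose s : ℤ) * ((s + 1).factorial : ℤ) *
        srLahZ S 0 ((n : ℤ) - s - 1) ((k : ℤ) - 1) := by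

  classical
  obtain ⟨k', rfl⟩ : ∃ k', k = k' + 1 := ⟨k - 1, (Nat.succ_pred_eq_of_pos hk).symm⟩
  -- abbreviation for the common summand
  set c : ℕ → ℤ := fun t => ((n - 1).choose (t - 1) : ℤ) * (t.factorial : ℤ) *
    (srLah S 0 (n - t) k' : ℤ) with hc
  -- ℕ-level ingredient 1
  have hC1n : srLah S 0 n (k' + 1) = ∑ s ∈ Finset.range (n + 1),
      (if s ∈ S then (n - 1).choose (s - 1) * s.factorial * srLah S 0 (n - s) k' else 0) := by
    have hcard : (Finset.univ : Finset (Fin n)).card = n := by simp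
    have := LP_card_succ S hS (Finset.univ : Finset (Fin n)) ⟨0, hn⟩ (Finset.mem_univ _) k'
    rw [hcard] at this
    rw [srLah_eq_card, this]
  -- ℕ-level ingredient 2
  have hC3n : ((n - 1) + (k' + 1)) * srLah S 0 (n - 1) (k' + 1)
      = ∑ s ∈ Finset.range n, (s + 1) *
          (if s ∈ S then (n - 1).choose s * s.factorial * srLah S 0 (n - 1 - s) k' else 0) := by
    have hcard : (Finset.univ : Finset (Fin (n - 1))).card = n - 1 := by simp
    have := LP_slot_identity S hS (Finset.univ : Finset (Fin (n - 1))) k'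
    rw [hcard] at this
    rw [srLah_eq_card, this]
    have hrange : n - 1 + 1 = n := Nat.succ_pred_eq_of_pos hn
    rw [hrange]
  -- cast ingredient 1 to ℤ
  have hC1 : (srLah S 0 n (k' + 1) : ℤ) = ∑ s ∈ Finset.range (n + 1),
      (if s ∈ S then c s else 0) := by
    rw [hC1n]
    push_cast
    refine Finset.sum_congr rfl fun s _ => ?_
    by_cases h : s ∈ S <;> simp [h, hc]
  -- cast ingredient 2 to ℤ
  have hC3 : (((n : ℤ) - 1) + (k' + 1)) * (srLah S 0 (n - 1) (k' + 1) : ℤ)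
      = ∑ s ∈ Finset.range n, (if s ∈ S then c (s + 1) else 0) := by
    have hcast : (((n - 1) + (k' + 1) : ℕ) : ℤ) = ((n : ℤ) - 1) + (k' + 1) := by
      have : (((n : ℕ) - 1 : ℕ) : ℤ) = (n : ℤ) - 1 := by
        rw [Nat.cast_sub hn]; norm_num
      push_cast [this]; ring
    have := congrArg (Nat.cast : ℕ → ℤ) hC3n
    rw [Nat.cast_mul, hcast] at this
    rw [this]
    push_cast
    refine Finset.sum_congr rfl fun s _ => ?_
    by_cases h : s ∈ S
    · simp only [if_pos h, hc]
      have h1 : n - (s + 1) = n - 1 - s := by omega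
      have h2 : (s + 1) - 1 = s := by omega
      rw [h1, h2, Nat.factorial_succ]
      push_cast
      ring
    · simp [h]
  -- convert the finsums to range sums
  have hfin1 : (∑ᶠ s ∈ {s ∈ S | s - 1 ∉ S}, ((n - 1).choose (s - 1) : ℤ) * (s.factorial : ℤ) *
        srLahZ S 0 ((n : ℤ) - s) ((k' + 1 : ℕ) - 1))
      = ∑ s ∈ Finset.range (n + 1),
          (if s ∈ S ∧ s - 1 ∉ S then c s else 0) := by
    rw [finsum_mem_eq_sum_of_inter_support_eq _
      (t := (Finset.range (n + 1)).filter (fun s => s ∈ S ∧ s - 1 ∉ S)) ?heq]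
    case heq =>
      ext s
      simp only [Set.mem_inter_iff, Set.mem_setOf_eq, Function.mem_support, Finset.coe_filter,
        Finset.mem_range]
      constructor
      · rintro ⟨⟨h1, h2⟩, h3⟩
        refine ⟨⟨?_, h1, h2⟩, h3⟩
        by_contra hlt
        push_neg at hlt
        have : (n - 1) < (s - 1) := by omega
        rw [Nat.choose_eq_zero_of_lt this] at h3
        simp at h3
      · rintro ⟨⟨-, h1, h2⟩, h3⟩
        exact ⟨⟨h1, h2⟩, h3⟩
    rw [Finset.sum_filter]
    refine Finset.sum_congr rfl fun s hs => ?_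
    rw [Finset.mem_range] at hs
    by_cases h : s ∈ S ∧ s - 1 ∉ S
    · rw [if_pos h, if_pos h, hc]
      have h1 : (n : ℤ) - s = ((n - s : ℕ) : ℤ) := by
        have : s ≤ n := by omega
        push_cast [Nat.cast_sub this]; ring
      have h2 : ((k' + 1 : ℕ) : ℤ) - 1 = (k' : ℤ) := by push_cast; ring
      rw [h1, h2, srLahZ_coe]
    · rw [if_neg h, if_neg h]
  have hfin2 : (∑ᶠ s ∈ {s ∈ S | s + 1 ∉ S}, ((n - 1).choose s : ℤ) * ((s + 1).factorial : ℤ) *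
        srLahZ S 0 ((n : ℤ) - s - 1) ((k' + 1 : ℕ) - 1))
      = ∑ s ∈ Finset.range n, (if s ∈ S ∧ s + 1 ∉ S then c (s + 1) else 0) := by
    rw [finsum_mem_eq_sum_of_inter_support_eq _
      (t := (Finset.range n).filter (fun s => s ∈ S ∧ s + 1 ∉ S)) ?heq]
    case heq =>
      ext s
      simp only [Set.mem_inter_iff, Set.mem_setOf_eq, Function.mem_support, Finset.coe_filter,
        Finset.mem_range]
      constructor
      · rintro ⟨⟨h1, h2⟩, h3⟩
        refine ⟨⟨?_, h1, h2⟩, h3⟩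
        by_contra hlt
        push_neg at hlt
        have : (n - 1) < s := by omega
        rw [Nat.choose_eq_zero_of_lt this] at h3
        simp at h3
      · rintro ⟨⟨-, h1, h2⟩, h3⟩
        exact ⟨⟨h1, h2⟩, h3⟩
    rw [Finset.sum_filter]
    refine Finset.sum_congr rfl fun s hs => ?_
    rw [Finset.mem_range] at hs
    by_cases h : s ∈ S ∧ s + 1 ∉ S
    · rw [if_pos h, if_pos h, hc]
      have h1 : (n : ℤ) - s - 1 = ((n - (s + 1) : ℕ) : ℤ) := by
        have : s + 1 ≤ n := by omega
        push_cast [Nat.cast_sub this]; ring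
      have h2 : ((k' + 1 : ℕ) : ℤ) - 1 = (k' : ℤ) := by push_cast; ring
      rw [h1, h2, srLahZ_coe]
      simp only [Nat.add_sub_cancel]
    · rw [if_neg h, if_neg h]
  -- rewrite the first RHS term
  have hfirst : ((n : ℤ) + (k' + 1 : ℕ) - 1) * srLahZ S 0 ((n : ℤ) - 1) (k' + 1 : ℕ)
      = ∑ s ∈ Finset.range n, (if s ∈ S then c (s + 1) else 0) := by
    have h1 : (n : ℤ) - 1 = ((n - 1 : ℕ) : ℤ) := by
      push_cast [Nat.cast_sub hn]; ring
    have h2 : ((n : ℤ) + (k' + 1 : ℕ) - 1) = ((n : ℤ) - 1) + ((k' : ℕ) + 1) := by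
      push_cast; ring
    rw [h2, h1, srLahZ_coe, ← h1, hC3]
  rw [hC1, hfirst, hfin1, hfin2]
  -- final algebra over range sums
  have hkey : (∑ s ∈ Finset.range (n + 1), (if s ∈ S then c s else 0))
      - (∑ s ∈ Finset.range (n + 1), (if s ∈ S ∧ s - 1 ∉ S then c s else 0))
      = (∑ s ∈ Finset.range n, (if s ∈ S then c (s + 1) else 0))
        - (∑ s ∈ Finset.range n, (if s ∈ S ∧ s + 1 ∉ S then c (s + 1) else 0)) := by
    rw [← Finset.sum_sub_distrib, ← Finset.sum_sub_distrib, Finset.sum_range_succ']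
    have h0 : (if (0 : ℕ) ∈ S then c 0 else 0) - (if (0 : ℕ) ∈ S ∧ 0 - 1 ∉ S then c 0 else 0)
        = 0 := by
      have h0S : (0 : ℕ) ∉ S := fun h => absurd (hS 0 h) (by omega)
      simp [h0S]
    rw [h0, add_zero]
    refine Finset.sum_congr rfl fun s _ => ?_
    have hsub : (s + 1) - 1 = s := by omega
    by_cases h1 : s ∈ S <;> by_cases h2 : s + 1 ∈ S <;> simp [h1, h2, hsub]
  linarith [hkey]
end

section
/- Let S be a set of positive integers and let n ≥ 1, k ≥ 1, r ≥ 1 be integers. Then L_{S,r}(n+1, k) = L_{S,r+1}(n, k−1) + r·Σ_{s∈S} s!·C(n, s−2)·L_{S,r−1}(n−s+2, k), where the sum has only finitely many nonzero terms and C(n, s−2) = 0 when s−2 < 0 or s−2 > n. -/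
open Finset
open scoped Classical

section Aux
variable {α : Type*} {β : Type*}

lemma exists_preimage_list (f : α → β) {l' : List β} (h : ∀ b ∈ l', b ∈ Set.range f) :
    ∃ l : List α, l.map f = l' := by
  induction l' with
  | nil => exact ⟨[], rfl⟩
  | cons b t ih =>
      obtain ⟨a, rfl⟩ := h b List.mem_cons_self
      obtain ⟨t₀, rfl⟩ := ih fun x hx => h _ (List.mem_cons_of_mem _ hx)
      exact ⟨a :: t₀, rfl⟩

def GoodL [DecidableEq α] (S : Set ℕ) (A D : Finset α) (l : List α) : Prop :=
  l ≠ [] ∧ l.Nodup ∧ l.length ∈ S ∧ (∀ a ∈ l, a ∈ A) ∧ (l.toFinset ∩ D).card ≤ 1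

def GSet [DecidableEq α] (S : Set ℕ) (A D : Finset α) (m : ℕ) : Set (Finset (List α)) :=
  {P | (∀ l ∈ P, GoodL S A D l) ∧ (∀ a ∈ A, ∃! l, l ∈ P ∧ a ∈ l) ∧ P.card = m}

lemma finite_nodup_lists [Fintype α] : {l : List α | l.Nodup}.Finite := by
  classical
  have : {l : List α | l.Nodup} ⊆
      ↑((Finset.univ : Finset (Σ m : Fin (Fintype.card α + 1), Fin m ↪ α)).image
        (fun p => List.ofFn p.2)) := by
    intro l hl
    simp only [Finset.coe_image, Set.mem_image, Finset.mem_coe, Finset.mem_univ, true_and,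
      Finset.coe_univ, Set.mem_univ, Set.image_univ, Set.mem_range]
    refine ⟨⟨⟨l.length, Nat.lt_succ_of_le hl.length_le_card⟩,
      ⟨fun i => l.get i, fun i j h => ?_⟩⟩, ?_⟩
    · exact (List.nodup_iff_injective_get.1 hl) h
    · simp [List.ofFn_get]
  exact Set.Finite.subset (Finset.finite_toSet _) this

lemma GSet_finite [Fintype α] [DecidableEq α] (S : Set ℕ) (A D : Finset α) (m : ℕ) :
    (GSet S A D m).Finite := by
  classical
  have h : GSet S A D m ⊆ ↑(finite_nodup_lists (α := α)).toFinset.powerset := by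
    intro P hP
    simp only [Finset.coe_powerset, Set.mem_preimage, Set.mem_powerset_iff]
    intro l hl
    simp only [Finset.coe_sort_coe, Set.Finite.coe_toFinset, Set.mem_setOf_eq]
    exact (hP.1 l hl).2.1
  exact Set.Finite.subset (Finset.finite_toSet _) h

lemma GSet_transport [Fintype α] [DecidableEq α] [DecidableEq β] (S : Set ℕ) (f : α → β)
    (hf : Function.Injective f) (D : Finset α) (D' : Finset β)
    (hD : ∀ a : α, a ∈ D ↔ f a ∈ D') (m : ℕ) :
    GSet S ((Finset.univ : Finset α).image f) D' m =
      (fun P : Finset (List α) => P.image (List.map f)) '' GSet S Finset.univ D m := by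
  have hmapinj : Function.Injective (List.map f) := List.map_injective_iff.2 hf
  ext P'
  constructor
  · rintro ⟨hgood, hcover, hcard⟩
    classical
    set Φ : List β → List α := fun l' =>
      if h : ∃ l : List α, l.map f = l' then h.choose else [] with hΦ
    have hΦ_spec : ∀ l' ∈ P', (Φ l').map f = l' := by
      intro l' hl'
      have hr : ∀ b ∈ l', b ∈ Set.range f := by
        intro b hb
        have := (hgood l' hl').2.2.2.1 b hb
        simp only [Finset.mem_image, Finset.mem_univ, true_and] at this
        obtain ⟨a, ha⟩ := this
        exact ⟨a, ha⟩
      have h : ∃ l : List α, l.map f = l' := exists_preimage_list f hr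
      simp only [hΦ, dif_pos h]
      exact h.choose_spec
    refine ⟨P'.image Φ, ⟨?_, ?_, ?_⟩, ?_⟩
    · -- all lists good
      intro l hl
      simp only [Finset.mem_image] at hl
      obtain ⟨l', hl', rfl⟩ := hl
      have hspec := hΦ_spec l' hl'
      obtain ⟨hne, hnd, hlen, _, hint⟩ := hgood l' hl'
      refine ⟨?_, ?_, ?_, fun a _ => Finset.mem_univ a, ?_⟩
      · intro h; rw [h] at hspec; simp at hspec; exact hne hspec
      · have h2 := hnd; rw [← hspec] at h2; exact h2.of_map f
      · have h2 := hlen; rw [← hspec] at h2; simpa using h2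
      · have hsub : ((Φ l').toFinset ∩ D).image f ⊆ l'.toFinset ∩ D' := by
          intro b hb
          simp only [Finset.mem_image, Finset.mem_inter, List.mem_toFinset] at hb ⊢
          obtain ⟨a, ⟨hal, haD⟩, rfl⟩ := hb
          constructor
          · rw [← hspec]; exact List.mem_map_of_mem hal
          · exact (hD a).1 haD
        calc ((Φ l').toFinset ∩ D).card = (((Φ l').toFinset ∩ D).image f).card :=
              (Finset.card_image_of_injective _ hf).symm
          _ ≤ (l'.toFinset ∩ D').card := Finset.card_le_card hsub
          _ ≤ 1 := hint
    · -- cover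
      intro a _
      have hfa : f a ∈ (Finset.univ : Finset α).image f := Finset.mem_image_of_mem f (Finset.mem_univ a)
      obtain ⟨l', ⟨hl'P, hfal'⟩, huniq⟩ := hcover (f a) hfa
      refine ⟨Φ l', ⟨Finset.mem_image_of_mem Φ hl'P, ?_⟩, ?_⟩
      · have : f a ∈ (Φ l').map f := by rw [hΦ_spec l' hl'P]; exact hfal'
        obtain ⟨a', ha', heq⟩ := List.mem_map.1 this
        rwa [hf heq] at ha'
      · rintro l ⟨hlP, hal⟩
        simp only [Finset.mem_image] at hlP
        obtain ⟨l'', hl'', rfl⟩ := hlP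
        have : f a ∈ l'' := by
          rw [← hΦ_spec l'' hl'']; exact List.mem_map_of_mem hal
        rw [huniq l'' ⟨hl'', this⟩]
    · -- card
      rw [Finset.card_image_of_injOn, hcard]
      intro l1 h1 l2 h2 heq
      have := hΦ_spec l1 h1
      rw [heq, hΦ_spec l2 h2] at this
      exact this.symm
    · -- image back
      show (P'.image Φ).image (List.map f) = P'
      rw [Finset.image_image]
      have : ∀ l' ∈ P', (List.map f ∘ Φ) l' = id l' := fun l' h => hΦ_spec l' h
      rw [Finset.image_congr (fun l' h => this l' h), Finset.image_id]
  · rintro ⟨P, ⟨hgood, hcover, hcard⟩, rfl⟩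
    refine ⟨?_, ?_, ?_⟩
    · intro l' hl'
      simp only [Finset.mem_image] at hl'
      obtain ⟨l, hl, rfl⟩ := hl'
      obtain ⟨hne, hnd, hlen, _, hint⟩ := hgood l hl
      refine ⟨by simpa using hne, hnd.map hf, by simpa using hlen, ?_, ?_⟩
      · intro b hb
        obtain ⟨a, _, rfl⟩ := List.mem_map.1 hb
        exact Finset.mem_image_of_mem f (Finset.mem_univ a)
      · have heq : (l.map f).toFinset ∩ D' = (l.toFinset ∩ D).image f := by
          ext b
          simp only [Finset.mem_inter, List.mem_toFinset, Finset.mem_image, List.mem_map]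
          constructor
          · rintro ⟨⟨a, hal, rfl⟩, hbD'⟩
            exact ⟨a, ⟨hal, (hD a).2 hbD'⟩, rfl⟩
          · rintro ⟨a, ⟨hal, haD⟩, rfl⟩
            exact ⟨⟨a, hal, rfl⟩, (hD a).1 haD⟩
        rw [heq, Finset.card_image_of_injective _ hf]
        exact hint
    · intro b hb
      simp only [Finset.mem_image, Finset.mem_univ, true_and] at hb
      obtain ⟨a, rfl⟩ := hb
      obtain ⟨l, ⟨hlP, hal⟩, huniq⟩ := hcover a (Finset.mem_univ a)
      refine ⟨l.map f, ⟨Finset.mem_image_of_mem _ hlP, List.mem_map_of_mem hal⟩, ?_⟩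
      rintro l' ⟨hl'P, hfal'⟩
      simp only [Finset.mem_image] at hl'P
      obtain ⟨l₀, hl₀, rfl⟩ := hl'P
      obtain ⟨a', ha', heq⟩ := List.mem_map.1 hfal'
      rw [huniq l₀ ⟨hl₀, (hf heq) ▸ ha'⟩]
    · rw [Finset.card_image_of_injective _ hmapinj, hcard]

lemma ncard_finset_biUnion {ι γ : Type*} (L : Finset ι) (f : ι → Set γ)
    (hfin : ∀ i ∈ L, (f i).Finite)
    (hdisj : ∀ i ∈ L, ∀ j ∈ L, i ≠ j → Disjoint (f i) (f j)) :
    (⋃ i ∈ L, f i).ncard = ∑ i ∈ L, (f i).ncard := by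
  classical
  induction L using Finset.induction_on with
  | empty => simp
  | @insert a L' hnotmem ih =>
      rw [Finset.sum_insert hnotmem]
      have hU : (⋃ i ∈ insert a L', f i) = f a ∪ ⋃ i ∈ L', f i := by
        simp [Set.biUnion_insert]
      have hfa : (f a).Finite := hfin a (Finset.mem_insert_self a L')
      have hrest : (⋃ i ∈ L', f i).Finite :=
        Set.Finite.biUnion (Finset.finite_toSet L') fun i hi =>
          hfin i (Finset.mem_insert_of_mem hi)
      have hd : Disjoint (f a) (⋃ i ∈ L', f i) := by
        refine Set.disjoint_iUnion₂_right.2 fun i hi => ?_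
        exact hdisj a (Finset.mem_insert_self a L') i (Finset.mem_insert_of_mem hi)
          (fun h => hnotmem (h ▸ hi))
      rw [hU, Set.ncard_union_eq hd hfa hrest,
        ih (fun i hi => hfin i (Finset.mem_insert_of_mem hi))
          (fun i hi j hj hij => hdisj i (Finset.mem_insert_of_mem hi) j
            (Finset.mem_insert_of_mem hj) hij)]

lemma GSet_fiber [DecidableEq α] (S : Set ℕ) (A D : Finset α) (m : ℕ) (hm : 1 ≤ m)
    {x : α} (hx : x ∈ A) {ℓ : List α} (hxl : x ∈ ℓ) (hℓgood : GoodL S A D ℓ) :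
    (GSet S A D m ∩ {P | ℓ ∈ P}).ncard = (GSet S (A \ ℓ.toFinset) D (m - 1)).ncard := by
  classical
  have himg : GSet S A D m ∩ {P | ℓ ∈ P} =
      (fun Q : Finset (List α) => insert ℓ Q) '' GSet S (A \ ℓ.toFinset) D (m - 1) := by
    ext P
    constructor
    · rintro ⟨⟨hgood, hcover, hcard⟩, hlP⟩
      refine ⟨P.erase ℓ, ⟨?_, ?_, ?_⟩, Finset.insert_erase hlP⟩
      · intro l hl
        have hlmem : l ∈ P := Finset.mem_of_mem_erase hl
        have hlne : l ≠ ℓ := Finset.ne_of_mem_erase hl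
        obtain ⟨h1, h2, h3, h4, h5⟩ := hgood l hlmem
        refine ⟨h1, h2, h3, ?_, h5⟩
        intro a hal
        rw [Finset.mem_sdiff]
        refine ⟨h4 a hal, fun haℓ => ?_⟩
        rw [List.mem_toFinset] at haℓ
        obtain ⟨u, _, huniq⟩ := hcover a (h4 a hal)
        exact hlne ((huniq l ⟨hlmem, hal⟩).trans (huniq ℓ ⟨hlP, haℓ⟩).symm)
      · intro a ha
        rw [Finset.mem_sdiff, List.mem_toFinset] at ha
        obtain ⟨l, ⟨hlP, hal⟩, huniq⟩ := hcover a ha.1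
        have hlne : l ≠ ℓ := fun h => ha.2 (h ▸ hal)
        refine ⟨l, ⟨Finset.mem_erase.2 ⟨hlne, hlP⟩, hal⟩, ?_⟩
        rintro l' ⟨hl', hal'⟩
        exact huniq l' ⟨Finset.mem_of_mem_erase hl', hal'⟩
      · rw [Finset.card_erase_of_mem hlP, hcard]
    · rintro ⟨Q, ⟨hgood, hcover, hcard⟩, rfl⟩
      have hℓQ : ℓ ∉ Q := by
        intro h
        have := (hgood ℓ h).2.2.2.1 x hxl
        rw [Finset.mem_sdiff, List.mem_toFinset] at this
        exact this.2 hxl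
      refine ⟨⟨?_, ?_, ?_⟩, Finset.mem_insert_self ℓ _⟩
      · intro l hl
        rcases Finset.mem_insert.1 hl with rfl | hl
        · exact hℓgood
        · obtain ⟨h1, h2, h3, h4, h5⟩ := hgood l hl
          exact ⟨h1, h2, h3, fun a hal => (Finset.mem_sdiff.1 (h4 a hal)).1, h5⟩
      · intro a ha
        by_cases haℓ : a ∈ ℓ
        · refine ⟨ℓ, ⟨Finset.mem_insert_self _ _, haℓ⟩, ?_⟩
          rintro l ⟨hl, hal⟩
          rcases Finset.mem_insert.1 hl with rfl | hl
          · rfl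
          · have := (hgood l hl).2.2.2.1 a hal
            rw [Finset.mem_sdiff, List.mem_toFinset] at this
            exact absurd haℓ this.2
        · have ha' : a ∈ A \ ℓ.toFinset := by
            rw [Finset.mem_sdiff, List.mem_toFinset]; exact ⟨ha, haℓ⟩
          obtain ⟨l, ⟨hlQ, hal⟩, huniq⟩ := hcover a ha'
          refine ⟨l, ⟨Finset.mem_insert_of_mem hlQ, hal⟩, ?_⟩
          rintro l' ⟨hl', hal'⟩
          rcases Finset.mem_insert.1 hl' with rfl | hl'
          · exact absurd hal' haℓ
          · exact huniq l' ⟨hl', hal'⟩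
      · rw [Finset.card_insert_of_notMem hℓQ, hcard]
        omega
  rw [himg, Set.ncard_image_of_injOn]
  rintro Q1 ⟨hg1, _, _⟩ Q2 ⟨hg2, _, _⟩ heq
  have h1 : ℓ ∉ Q1 := by
    intro h
    have := (hg1 ℓ h).2.2.2.1 x hxl
    rw [Finset.mem_sdiff, List.mem_toFinset] at this
    exact this.2 hxl
  have h2 : ℓ ∉ Q2 := by
    intro h
    have := (hg2 ℓ h).2.2.2.1 x hxl
    rw [Finset.mem_sdiff, List.mem_toFinset] at this
    exact this.2 hxl
  have := congrArg (Finset.erase · ℓ) heq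
  simpa [Finset.erase_insert h1, Finset.erase_insert h2] using this

lemma GSet_split [Fintype α] [DecidableEq α] (S : Set ℕ) (A D : Finset α) (m : ℕ) {x : α} (hx : x ∈ A)
    (L : Finset (List α)) (hL : ∀ ℓ ∈ L, x ∈ ℓ) :
    (GSet S A D m ∩ {P | ∃ ℓ ∈ L, ℓ ∈ P}).ncard =
      ∑ ℓ ∈ L, (GSet S A D m ∩ {P | ℓ ∈ P}).ncard := by
  have hU : GSet S A D m ∩ {P | ∃ ℓ ∈ L, ℓ ∈ P} =
      ⋃ ℓ ∈ L, (GSet S A D m ∩ {P | ℓ ∈ P}) := by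
    ext P
    simp only [Set.mem_inter_iff, Set.mem_setOf_eq, Set.mem_iUnion]
    tauto
  rw [hU]
  refine ncard_finset_biUnion L _ (fun ℓ _ => Set.Finite.subset (GSet_finite S A D m)
    Set.inter_subset_left) ?_
  intro ℓ1 h1 ℓ2 h2 hne
  rw [Set.disjoint_left]
  rintro P ⟨⟨_, hcover, _⟩, hP1⟩ ⟨_, hP2⟩
  obtain ⟨u, _, huniq⟩ := hcover x hx
  exact hne ((huniq ℓ1 ⟨hP1, hL ℓ1 h1⟩).trans (huniq ℓ2 ⟨hP2, hL ℓ2 h2⟩).symm)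

lemma ncard_nodup_lists_toFinset_eq [DecidableEq α] (F : Finset α) :
    {ℓ : List α | ℓ.Nodup ∧ ℓ.toFinset = F}.ncard = F.card.factorial := by
  classical
  set l₀ := F.toList with hl₀
  have hnd₀ : l₀.Nodup := F.nodup_toList
  have hset : {ℓ : List α | ℓ.Nodup ∧ ℓ.toFinset = F} = ↑(l₀.permutations.toFinset) := by
    ext ℓ
    simp only [Set.mem_setOf_eq, Finset.coe_sort_coe, Finset.mem_coe, List.mem_toFinset,
      List.mem_permutations]
    constructor
    · rintro ⟨hnd, hF⟩
      exact List.perm_of_nodup_nodup_toFinset_eq hnd hnd₀ (by rw [hF, hl₀, Finset.toList_toFinset])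
    · intro hperm
      refine ⟨hperm.nodup_iff.2 hnd₀, ?_⟩
      rw [List.toFinset_eq_of_perm _ _ hperm, hl₀, Finset.toList_toFinset]
  rw [hset, Set.ncard_coe_finset, List.toFinset_card_of_nodup (List.nodup_permutations _ hnd₀),
    List.length_permutations, Finset.length_toList]

lemma exists_ground_embedding {β : Type*} [DecidableEq β] (A' D' : Finset β) (hDA : D' ⊆ A')
    (n' r' : ℕ) (hA : A'.card = n' + r') (hDc : D'.card = r') :
    ∃ f : Fin (n' + r') → β, Function.Injective f ∧
      (Finset.univ.image f = A') ∧ ∀ i : Fin (n' + r'), (f i ∈ D' ↔ (i : ℕ) < r') := by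
  classical
  have hc1 : Fintype.card D' = r' := by simp [hDc]
  have hc2 : Fintype.card (A' \ D' : Finset β) = n' := by
    simp [Finset.card_sdiff_of_subset hDA, hA, hDc]
  obtain ⟨e1⟩ : Nonempty (Fin r' ≃ D') := ⟨(Fintype.equivFinOfCardEq hc1).symm⟩
  obtain ⟨e2⟩ : Nonempty (Fin n' ≃ (A' \ D' : Finset β)) := ⟨(Fintype.equivFinOfCardEq hc2).symm⟩
  refine ⟨fun i => if h : (i : ℕ) < r' then (e1 ⟨i, h⟩ : β)
    else (e2 ⟨(i : ℕ) - r', by omega⟩ : β), ?_, ?_, ?_⟩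
  · intro i j hij
    by_cases hi : (i : ℕ) < r' <;> by_cases hj : (j : ℕ) < r'
    · simp only [dif_pos hi, dif_pos hj] at hij
      have h' := e1.injective (Subtype.val_injective hij)
      have h'' : (i : ℕ) = (j : ℕ) := congrArg (fun t : Fin r' => (t : ℕ)) h'
      exact Fin.ext h''
    · simp only [dif_pos hi, dif_neg hj] at hij
      have h1 : (e1 ⟨i, hi⟩ : β) ∈ D' := (e1 ⟨i, hi⟩).2
      have h2 := (e2 ⟨(j : ℕ) - r', by omega⟩).2
      rw [Finset.mem_sdiff] at h2
      exact absurd (hij ▸ h1) h2.2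
    · simp only [dif_neg hi, dif_pos hj] at hij
      have h1 : (e1 ⟨j, hj⟩ : β) ∈ D' := (e1 ⟨j, hj⟩).2
      have h2 := (e2 ⟨(i : ℕ) - r', by omega⟩).2
      rw [Finset.mem_sdiff] at h2
      exact absurd (hij ▸ h1) h2.2
    · simp only [dif_neg hi, dif_neg hj] at hij
      have h' := e2.injective (Subtype.val_injective hij)
      have h'' : (i : ℕ) - r' = (j : ℕ) - r' := congrArg (fun t : Fin n' => (t : ℕ)) h'
      exact Fin.ext (by omega)
  · ext b
    simp only [Finset.mem_image, Finset.mem_univ, true_and]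
    constructor
    · rintro ⟨i, rfl⟩
      by_cases hi : (i : ℕ) < r'
      · rw [dif_pos hi]; exact hDA (e1 ⟨i, hi⟩).2
      · rw [dif_neg hi]
        exact (Finset.mem_sdiff.1 (e2 ⟨(i : ℕ) - r', by omega⟩).2).1
    · intro hb
      by_cases hbD : b ∈ D'
      · refine ⟨⟨(e1.symm ⟨b, hbD⟩ : Fin r'), by omega⟩, ?_⟩
        rw [dif_pos (by simpa using (e1.symm ⟨b, hbD⟩).2)]
        simp only
        rw [show (⟨((e1.symm ⟨b, hbD⟩ : Fin r') : ℕ), _⟩ : Fin r') = e1.symm ⟨b, hbD⟩ from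
          Fin.ext rfl, Equiv.apply_symm_apply]
      · have hbAD : b ∈ A' \ D' := Finset.mem_sdiff.2 ⟨hb, hbD⟩
        refine ⟨⟨r' + (e2.symm ⟨b, hbAD⟩ : Fin n'), by omega⟩, ?_⟩
        rw [dif_neg (by simp)]
        simp only
        rw [show (⟨r' + ((e2.symm ⟨b, hbAD⟩ : Fin n') : ℕ) - r', _⟩ : Fin n') = e2.symm ⟨b, hbAD⟩
          from Fin.ext (by simp), Equiv.apply_symm_apply]
  · intro i
    by_cases hi : (i : ℕ) < r'
    · simp only [dif_pos hi]
      exact ⟨fun _ => hi, fun _ => (e1 ⟨i, hi⟩).2⟩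
    · simp only [dif_neg hi]
      have h2 := (e2 ⟨(i : ℕ) - r', by omega⟩).2
      rw [Finset.mem_sdiff] at h2
      exact ⟨fun h => absurd h h2.2, fun h => absurd h hi⟩

lemma srLahSet_eq_GSet (S : Set ℕ) (r n k : ℕ) :
    srLahSet S r n k = GSet S (Finset.univ : Finset (Fin (n + r)))
      (Finset.univ.filter fun i : Fin (n + r) => (i : ℕ) < r) (k + r) := by
  ext P
  constructor
  · rintro ⟨⟨hnn, hcover⟩, hcard, hlen, hdist⟩
    refine ⟨fun l hl => ⟨(hnn l hl).1, (hnn l hl).2, hlen l hl, fun a _ => Finset.mem_univ a, ?_⟩,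
      fun a _ => hcover a, hcard⟩
    rw [Finset.card_le_one]
    intro a ha b hb
    simp only [Finset.mem_inter, List.mem_toFinset, Finset.mem_filter] at ha hb
    by_contra hne
    exact hdist a b ha.2.2 hb.2.2 hne l hl ha.1 hb.1
  · rintro ⟨hgood, hcover, hcard⟩
    refine ⟨⟨fun l hl => ⟨(hgood l hl).1, (hgood l hl).2.1⟩, fun a => hcover a (Finset.mem_univ a)⟩,
      hcard, fun l hl => (hgood l hl).2.2.1, ?_⟩
    intro i j hi hj hij l hl hil hjl
    have h5 := (hgood l hl).2.2.2.2
    rw [Finset.card_le_one] at h5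
    refine hij (h5 (a := i) ?_ (b := j) ?_) <;> simp [hil, hjl, hi, hj]

lemma count_lists [Fintype α] [DecidableEq α] (S : Set ℕ) (D : Finset α) (x : α) (hx : x ∉ D)
    (s : ℕ) (hsS : s ∈ S) (h2 : 2 ≤ s) :
    {ℓ : List α | GoodL S Finset.univ D ℓ ∧ x ∈ ℓ ∧ (ℓ.toFinset ∩ D).Nonempty ∧
        ℓ.length = s}.ncard =
      D.card * (Fintype.card α - D.card - 1).choose (s - 2) * s.factorial := by
  classical
  set O : Finset α := Finset.univ \ insert x D with hO
  have hOcard : O.card = Fintype.card α - D.card - 1 := by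
    rw [hO, Finset.card_sdiff_of_subset (Finset.subset_univ _), Finset.card_insert_of_notMem hx,
      Finset.card_univ]
    omega
  set 𝒻 : Finset (Finset α) :=
    Finset.univ.filter (fun F => x ∈ F ∧ F.card = s ∧ (F ∩ D).card = 1) with h𝒻
  -- Step A: description as a union over element sets
  have hA : {ℓ : List α | GoodL S Finset.univ D ℓ ∧ x ∈ ℓ ∧ (ℓ.toFinset ∩ D).Nonempty ∧
      ℓ.length = s} = ⋃ F ∈ 𝒻, {ℓ : List α | ℓ.Nodup ∧ ℓ.toFinset = F} := by
    ext ℓ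
    simp only [Set.mem_setOf_eq, Set.mem_iUnion, h𝒻, Finset.mem_filter, Finset.mem_univ,
      true_and]
    constructor
    · rintro ⟨⟨hne, hnd, hlen, _, hint⟩, hxl, hnonempty, hlens⟩
      refine ⟨ℓ.toFinset, ⟨List.mem_toFinset.2 hxl, ?_, ?_⟩, hnd, rfl⟩
      · rw [List.toFinset_card_of_nodup hnd, hlens]
      · have := Finset.card_pos.2 hnonempty
        omega
    · rintro ⟨F, ⟨hxF, hFcard, hFD⟩, hnd, rfl⟩
      have hlen : ℓ.length = s := by rw [← List.toFinset_card_of_nodup hnd, hFcard]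
      refine ⟨⟨?_, hnd, hlen ▸ hsS, fun a _ => Finset.mem_univ a, hFD.le⟩,
        List.mem_toFinset.1 hxF, ?_, hlen⟩
      · intro h; rw [h] at hlen; simp at hlen; omega
      · exact Finset.card_pos.1 (by omega)
  -- Step B
  have hB : (⋃ F ∈ 𝒻, {ℓ : List α | ℓ.Nodup ∧ ℓ.toFinset = F}).ncard =
      𝒻.card * s.factorial := by
    rw [ncard_finset_biUnion]
    · rw [Finset.sum_congr rfl (fun F hF => ?_), Finset.sum_const, smul_eq_mul]
      rw [ncard_nodup_lists_toFinset_eq F]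
      simp only [h𝒻, Finset.mem_filter] at hF
      rw [hF.2.2.1]
    · intro F _
      exact Set.Finite.subset finite_nodup_lists (fun ℓ hℓ => hℓ.1)
    · intro F1 _ F2 _ hne
      rw [Set.disjoint_left]
      rintro ℓ ⟨_, rfl⟩ ⟨_, h⟩
      exact hne h
  -- Step C
  have hC : 𝒻.card = D.card * O.card.choose (s - 2) := by
    have hsplit : 𝒻 = D.biUnion (fun i =>
        Finset.univ.filter (fun F => x ∈ F ∧ F.card = s ∧ F ∩ D = {i})) := by
      ext F
      simp only [h𝒻, Finset.mem_filter, Finset.mem_univ, true_and, Finset.mem_biUnion]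
      constructor
      · rintro ⟨hxF, hFc, hFD⟩
        obtain ⟨i, hi⟩ := Finset.card_eq_one.1 hFD
        have hiD : i ∈ D := (Finset.mem_inter.1 (hi ▸ Finset.mem_singleton_self i)).2
        exact ⟨i, hiD, hxF, hFc, hi⟩
      · rintro ⟨i, hiD, hxF, hFc, hi⟩
        exact ⟨hxF, hFc, by rw [hi]; simp⟩
    rw [hsplit, Finset.card_biUnion, Finset.sum_congr rfl (fun i hiD => ?_),
      Finset.sum_const, smul_eq_mul]
    · -- card of each fiber = choose
      have hxi : x ≠ i := fun h => hx (h ▸ hiD)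
      rw [← Finset.card_powersetCard (s - 2) O]
      refine Finset.card_bij' (fun F _ => F \ {x, i}) (fun G _ => G ∪ {x, i}) ?_ ?_ ?_ ?_
      · intro F hF
        simp only [Finset.mem_filter, Finset.mem_univ, true_and] at hF
        obtain ⟨hxF, hFc, hFD⟩ := hF
        have hiF : i ∈ F := (Finset.mem_inter.1 (hFD ▸ Finset.mem_singleton_self i)).1
        rw [Finset.mem_powersetCard]
        constructor
        · intro a ha
          rw [Finset.mem_sdiff, Finset.mem_insert, Finset.mem_singleton] at ha
          obtain ⟨haF, hax⟩ := ha
          push_neg at hax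
          rw [hO, Finset.mem_sdiff, Finset.mem_insert]
          refine ⟨Finset.mem_univ a, ?_⟩
          push_neg
          refine ⟨hax.1, fun haD => ?_⟩
          have : a ∈ F ∩ D := Finset.mem_inter.2 ⟨haF, haD⟩
          rw [hFD, Finset.mem_singleton] at this
          exact hax.2 this
        · have hsub : {x, i} ⊆ F := by
            intro a ha
            rw [Finset.mem_insert, Finset.mem_singleton] at ha
            rcases ha with rfl | rfl
            exacts [hxF, hiF]
          rw [Finset.card_sdiff_of_subset hsub, hFc, Finset.card_insert_of_notMem (by simpa using hxi),
            Finset.card_singleton]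
      · intro G hG
        rw [Finset.mem_powersetCard] at hG
        obtain ⟨hGO, hGc⟩ := hG
        have hdisj : Disjoint G {x, i} := by
          rw [Finset.disjoint_left]
          intro a haG ha
          have := hGO haG
          rw [hO, Finset.mem_sdiff, Finset.mem_insert] at this
          rw [Finset.mem_insert, Finset.mem_singleton] at ha
          rcases ha with rfl | rfl
          · exact this.2 (Or.inl rfl)
          · exact this.2 (Or.inr hiD)
        simp only [Finset.mem_filter, Finset.mem_univ, true_and]
        refine ⟨by simp, ?_, ?_⟩
        · rw [Finset.card_union_of_disjoint hdisj, hGc,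
            Finset.card_insert_of_notMem (by simpa using hxi), Finset.card_singleton]
          omega
        · ext a
          simp only [Finset.mem_inter, Finset.mem_union, Finset.mem_insert,
            Finset.mem_singleton]
          constructor
          · rintro ⟨haG | rfl | rfl, haD⟩
            · exfalso
              have := hGO haG
              rw [hO, Finset.mem_sdiff, Finset.mem_insert] at this
              exact this.2 (Or.inr haD)
            · exact absurd haD hx
            · rfl
          · rintro rfl
            exact ⟨Or.inr (Or.inr rfl), hiD⟩
      · intro F hF
        simp only [Finset.mem_filter, Finset.mem_univ, true_and] at hF
        obtain ⟨hxF, hFc, hFD⟩ := hF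
        have hiF : i ∈ F := (Finset.mem_inter.1 (hFD ▸ Finset.mem_singleton_self i)).1
        have hsub : {x, i} ⊆ F := by
          intro a ha
          rw [Finset.mem_insert, Finset.mem_singleton] at ha
          rcases ha with rfl | rfl
          exacts [hxF, hiF]
        show (F \ {x, i}) ∪ {x, i} = F
        exact Finset.sdiff_union_of_subset hsub
      · intro G hG
        rw [Finset.mem_powersetCard] at hG
        have hdisj : Disjoint G {x, i} := by
          rw [Finset.disjoint_left]
          intro a haG ha
          have := hG.1 haG
          rw [hO, Finset.mem_sdiff, Finset.mem_insert] at this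
          rw [Finset.mem_insert, Finset.mem_singleton] at ha
          rcases ha with rfl | rfl
          · exact this.2 (Or.inl rfl)
          · exact this.2 (Or.inr hiD)
        show (G ∪ {x, i}) \ {x, i} = G
        rw [Finset.union_sdiff_cancel_right hdisj]
    · -- disjointness of fibers
      intro i1 h1 i2 h2' h12
      rw [Function.onFun, Finset.disjoint_left]
      intro F hF1 hF2
      simp only [Finset.mem_filter] at hF1 hF2
      have := hF1.2.2.2.symm.trans hF2.2.2.2
      exact h12 (Finset.singleton_injective this)
  rw [hA, hB, hC, hOcard]

lemma GSet_congr_D {α : Type*} [DecidableEq α] {S : Set ℕ} {A D D' : Finset α} {m : ℕ}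
    (h : D ∩ A = D' ∩ A) : GSet S A D m = GSet S A D' m := by
  have key : ∀ (l : List α), (∀ a ∈ l, a ∈ A) → l.toFinset ∩ D = l.toFinset ∩ D' := by
    intro l hl
    ext a
    simp only [Finset.mem_inter, List.mem_toFinset]
    constructor
    · rintro ⟨hal, haD⟩
      have : a ∈ D' ∩ A := h ▸ Finset.mem_inter.2 ⟨haD, hl a hal⟩
      exact ⟨hal, (Finset.mem_inter.1 this).1⟩
    · rintro ⟨hal, haD⟩
      have : a ∈ D ∩ A := h.symm ▸ Finset.mem_inter.2 ⟨haD, hl a hal⟩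
      exact ⟨hal, (Finset.mem_inter.1 this).1⟩
  ext P
  constructor <;> rintro ⟨hgood, hcover, hcard⟩
  · refine ⟨fun l hl => ?_, hcover, hcard⟩
    obtain ⟨h1, h2, h3, h4, h5⟩ := hgood l hl
    exact ⟨h1, h2, h3, h4, by rw [← key l h4]; exact h5⟩
  · refine ⟨fun l hl => ?_, hcover, hcard⟩
    obtain ⟨h1, h2, h3, h4, h5⟩ := hgood l hl
    exact ⟨h1, h2, h3, h4, by rw [key l h4]; exact h5⟩


end Aux

/-- recurrence
`L_{S,r}(n+1,k) = L_{S,r+1}(n,k−1) + r·Σ_{s∈S} s!·C(n,s−2)·L_{S,r−1}(n−s+2,k)`,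
with `C(n,s−2) = 0` when `s−2 < 0`. -/
theorem srLah_recurrence (S : Set ℕ) (hS : ∀ s ∈ S, 0 < s) (r n k : ℕ)
    (hr : 1 ≤ r) (hn : 1 ≤ n) (hk : 1 ≤ k) :
    (srLah S r (n + 1) k : ℤ) =
      (srLah S (r + 1) n (k - 1) : ℤ) +
      r * ∑ᶠ s ∈ S, (s.factorial : ℤ) * (if 2 ≤ s then (n.choose (s - 2) : ℤ) else 0) *
        srLahZ S (r - 1) ((n : ℤ) - s + 2) k := by
  classical
  set D : Finset (Fin (n + 1 + r)) := Finset.univ.filter (fun i => (i : ℕ) < r) with hDdef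
  have hxlt : r < n + 1 + r := by omega
  set x : Fin (n + 1 + r) := ⟨r, hxlt⟩ with hxdef
  have hxD : x ∉ D := by simp [hDdef, hxdef]
  have hDcard : D.card = r := by
    have hcr : (Finset.univ.filter (fun i : Fin (n + 1 + r) => (i : ℕ) < r)).card
        = (Finset.range r).card := by
      refine Finset.card_nbij' (fun i => (i : ℕ))
        (fun m => if h : m < n + 1 + r then (⟨m, h⟩ : Fin (n + 1 + r)) else x) ?_ ?_ ?_ ?_
      · intro a ha
        simp only [Finset.mem_coe, Finset.mem_filter] at ha
        simp [ha.2]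
      · intro m hm
        rw [Finset.mem_coe, Finset.mem_range] at hm
        simp only [dif_pos (show m < n + 1 + r by omega), Finset.mem_coe, Finset.mem_filter]
        exact ⟨Finset.mem_univ _, by simpa using hm⟩
      · intro a ha
        simp only [Finset.mem_coe, Finset.mem_filter] at ha
        simp only [dif_pos a.isLt]
      · intro m hm
        rw [Finset.mem_coe, Finset.mem_range] at hm
        simp only [dif_pos (show m < n + 1 + r by omega)]
    rw [hDdef, hcr, Finset.card_range]
  set G := GSet S (Finset.univ : Finset (Fin (n + 1 + r))) D (k + r) with hGdef
  have hstep1 : srLah S r (n + 1) k = G.ncard := by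
    rw [srLah, Nat.card_coe_set_eq, srLahSet_eq_GSet]
  -- the two parts
  set C₀ : Set (Finset (List (Fin (n + 1 + r)))) :=
    {P | ∀ ℓ ∈ P, x ∈ ℓ → ℓ.toFinset ∩ D = ∅} with hC₀def
  set C₁ : Set (Finset (List (Fin (n + 1 + r)))) :=
    {P | ∃ ℓ ∈ P, x ∈ ℓ ∧ (ℓ.toFinset ∩ D).Nonempty} with hC₁def
  have hsplitG : G.ncard = (G ∩ C₀).ncard + (G ∩ C₁).ncard := by
    have hcup : G = (G ∩ C₀) ∪ (G ∩ C₁) := by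
      ext P
      constructor
      · intro hP
        obtain ⟨ℓ₀, ⟨hℓ₀P, hxℓ₀⟩, huniq⟩ := hP.2.1 x (Finset.mem_univ x)
        by_cases hne : (ℓ₀.toFinset ∩ D).Nonempty
        · exact Or.inr ⟨hP, ℓ₀, hℓ₀P, hxℓ₀, hne⟩
        · refine Or.inl ⟨hP, fun ℓ hℓ hxℓ => ?_⟩
          rw [huniq ℓ ⟨hℓ, hxℓ⟩]
          exact Finset.not_nonempty_iff_eq_empty.1 hne
      · rintro (⟨hP, _⟩ | ⟨hP, _⟩) <;> exact hP
    have hdisj : Disjoint (G ∩ C₀) (G ∩ C₁) := by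
      rw [Set.disjoint_left]
      rintro P ⟨_, h0⟩ ⟨_, ℓ, hℓP, hxℓ, hne⟩
      rw [h0 ℓ hℓP hxℓ] at hne
      exact Finset.not_nonempty_empty hne
    rw [← Set.ncard_union_eq hdisj (Set.Finite.subset (GSet_finite S _ D (k + r))
      Set.inter_subset_left) (Set.Finite.subset (GSet_finite S _ D (k + r))
      Set.inter_subset_left), ← hcup]
  -- Step 3 : first part equals srLah S (r+1) n (k-1)
  set D₂ : Finset (Fin (n + 1 + r)) := Finset.univ.filter (fun i => (i : ℕ) < r + 1) with hD₂def
  have hC0eq : G ∩ C₀ = GSet S Finset.univ D₂ (k + r) := by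
    have hDD₂ : D ⊆ D₂ := by
      intro a ha
      simp only [hDdef, Finset.mem_filter] at ha
      simp only [hD₂def, Finset.mem_filter]
      exact ⟨ha.1, by omega⟩
    ext P
    constructor
    · rintro ⟨⟨hgood, hcover, hcard⟩, h0⟩
      refine ⟨fun l hl => ?_, hcover, hcard⟩
      obtain ⟨h1, h2, h3, h4, h5⟩ := hgood l hl
      refine ⟨h1, h2, h3, h4, ?_⟩
      by_cases hxl : x ∈ l
      · have hsub : l.toFinset ∩ D₂ ⊆ {x} := by
          intro a ha
          rw [Finset.mem_inter, List.mem_toFinset] at ha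
          rw [Finset.mem_singleton]
          by_contra hax
          have haD : a ∈ D := by
            simp only [hD₂def, Finset.mem_filter] at ha
            simp only [hDdef, Finset.mem_filter]
            refine ⟨Finset.mem_univ a, ?_⟩
            have : (a : ℕ) ≠ r := fun h => hax (Fin.ext (by rw [h, hxdef]))
            omega
          have : a ∈ l.toFinset ∩ D := by
            rw [Finset.mem_inter, List.mem_toFinset]
            exact ⟨ha.1, haD⟩
          rw [h0 l hl hxl] at this
          exact absurd this (Finset.notMem_empty a)
        calc (l.toFinset ∩ D₂).card ≤ ({x} : Finset (Fin (n+1+r))).card :=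
              Finset.card_le_card hsub
          _ = 1 := Finset.card_singleton x
      · have hsub : l.toFinset ∩ D₂ ⊆ l.toFinset ∩ D := by
          intro a ha
          rw [Finset.mem_inter] at ha ⊢
          refine ⟨ha.1, ?_⟩
          have haD₂ := ha.2
          simp only [hD₂def, Finset.mem_filter] at haD₂
          simp only [hDdef, Finset.mem_filter]
          refine ⟨Finset.mem_univ a, ?_⟩
          have hane : (a : ℕ) ≠ r := by
            intro h
            have hax : a = x := Fin.ext h
            exact hxl (hax ▸ List.mem_toFinset.1 ha.1)
          omega
        exact le_trans (Finset.card_le_card hsub) h5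
    · rintro ⟨hgood, hcover, hcard⟩
      have hgood' : ∀ l ∈ P, GoodL S Finset.univ D l := by
        intro l hl
        obtain ⟨h1, h2, h3, h4, h5⟩ := hgood l hl
        exact ⟨h1, h2, h3, h4, le_trans (Finset.card_le_card
          (Finset.inter_subset_inter (le_refl _) hDD₂)) h5⟩
      refine ⟨⟨hgood', hcover, hcard⟩, ?_⟩
      intro ℓ hℓ hxℓ
      have h5 := (hgood ℓ hℓ).2.2.2.2
      have hxin : x ∈ ℓ.toFinset ∩ D₂ := by
        rw [Finset.mem_inter, List.mem_toFinset]
        refine ⟨hxℓ, ?_⟩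
        simp [hD₂def, hxdef]
      rw [Finset.eq_empty_iff_forall_notMem]
      intro a ha
      rw [Finset.mem_inter] at ha
      have haD₂ : a ∈ ℓ.toFinset ∩ D₂ :=
        Finset.mem_inter.2 ⟨ha.1, hDD₂ ha.2⟩
      have : a = x := Finset.card_le_one.1 h5 a haD₂ x hxin
      rw [this] at ha
      exact hxD ha.2
  have hstep3 : (G ∩ C₀).ncard = srLah S (r + 1) n (k - 1) := by
    rw [hC0eq]
    have hcast : n + (r + 1) = n + 1 + r := by omega
    set f : Fin (n + (r + 1)) → Fin (n + 1 + r) := fun i => ⟨(i : ℕ), by omega⟩ with hfdef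
    have hinj : Function.Injective f := by
      intro a b hab
      have h' : ((f a : Fin (n + 1 + r)) : ℕ) = ((f b : Fin (n + 1 + r)) : ℕ) :=
        congrArg Fin.val hab
      exact Fin.ext h'
    have himg : (Finset.univ : Finset (Fin (n + (r + 1)))).image f = Finset.univ := by
      ext b
      simp only [Finset.mem_image, Finset.mem_univ, true_and, iff_true]
      exact ⟨⟨(b : ℕ), by omega⟩, Fin.ext rfl⟩
    have hDiff : ∀ a : Fin (n + (r + 1)),
        a ∈ Finset.univ.filter (fun i : Fin (n + (r + 1)) => (i : ℕ) < r + 1) ↔ f a ∈ D₂ := by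
      intro a
      simp [hD₂def, hfdef]
    have htrans := GSet_transport S f hinj
      (Finset.univ.filter (fun i : Fin (n + (r + 1)) => (i : ℕ) < r + 1)) D₂ hDiff (k + r)
    rw [himg] at htrans
    rw [htrans, Set.ncard_image_of_injOn
      (Function.Injective.injOn (Finset.image_injective (List.map_injective_iff.2 hinj)))]
    rw [srLah, Nat.card_coe_set_eq, srLahSet_eq_GSet]
    have : k - 1 + (r + 1) = k + r := by omega
    rw [this]
  -- Step 4: second part
  have hL₁fin : {ℓ : List (Fin (n + 1 + r)) | GoodL S Finset.univ D ℓ ∧ x ∈ ℓ ∧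
      (ℓ.toFinset ∩ D).Nonempty}.Finite :=
    Set.Finite.subset finite_nodup_lists (fun ℓ h => h.1.2.1)
  set L₁ : Finset (List (Fin (n + 1 + r))) := hL₁fin.toFinset with hL₁def
  have hmemL₁ : ∀ ℓ, ℓ ∈ L₁ ↔ GoodL S Finset.univ D ℓ ∧ x ∈ ℓ ∧ (ℓ.toFinset ∩ D).Nonempty := by
    intro ℓ
    rw [hL₁def, Set.Finite.mem_toFinset]
    rfl
  have hfacts : ∀ ℓ ∈ L₁, 2 ≤ ℓ.length ∧ ℓ.length ≤ n + 2 := by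
    intro ℓ hℓ
    obtain ⟨⟨hne, hnd, hlen, _, hint⟩, hxℓ, hinter⟩ := (hmemL₁ ℓ).1 hℓ
    obtain ⟨i, hi⟩ := hinter
    rw [Finset.mem_inter] at hi
    have hxi : x ≠ i := fun h => hxD (h ▸ hi.2)
    constructor
    · have hsub : ({x, i} : Finset (Fin (n+1+r))) ⊆ ℓ.toFinset := by
        intro a ha
        rw [Finset.mem_insert, Finset.mem_singleton] at ha
        rcases ha with rfl | rfl
        · exact List.mem_toFinset.2 hxℓ
        · exact hi.1
      have h2 : ({x, i} : Finset (Fin (n+1+r))).card = 2 := by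
        rw [Finset.card_insert_of_notMem (by simpa using hxi), Finset.card_singleton]
      calc 2 = ({x, i} : Finset (Fin (n+1+r))).card := h2.symm
        _ ≤ ℓ.toFinset.card := Finset.card_le_card hsub
        _ = ℓ.length := List.toFinset_card_of_nodup hnd
    · have hsd : ℓ.toFinset \ D ⊆ Finset.univ \ D := by
        intro a ha
        rw [Finset.mem_sdiff] at ha ⊢
        exact ⟨Finset.mem_univ a, ha.2⟩
      have h1 : (Finset.univ \ D).card = n + 1 := by
        rw [Finset.card_sdiff_of_subset (Finset.subset_univ D), Finset.card_univ, Fintype.card_fin, hDcard]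
        omega
      have := Finset.card_inter_add_card_sdiff ℓ.toFinset D
      have h3 := Finset.card_le_card hsd
      rw [h1] at h3
      rw [← List.toFinset_card_of_nodup hnd]
      omega
  have hC1eq : G ∩ C₁ = G ∩ {P | ∃ ℓ ∈ L₁, ℓ ∈ P} := by
    ext P
    simp only [Set.mem_inter_iff, Set.mem_setOf_eq, hC₁def]
    constructor
    · rintro ⟨hP, ℓ, hℓP, hxℓ, hne⟩
      exact ⟨hP, ℓ, (hmemL₁ ℓ).2 ⟨hP.1 ℓ hℓP, hxℓ, hne⟩, hℓP⟩
    · rintro ⟨hP, ℓ, hℓL, hℓP⟩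
      obtain ⟨_, hxℓ, hne⟩ := (hmemL₁ ℓ).1 hℓL
      exact ⟨hP, ℓ, hℓP, hxℓ, hne⟩
  have hstep4 : (G ∩ C₁).ncard = ∑ ℓ ∈ L₁, (G ∩ {P | ℓ ∈ P}).ncard := by
    rw [hC1eq, hGdef]
    exact GSet_split S Finset.univ D (k + r) (Finset.mem_univ x) L₁
      (fun ℓ hℓ => ((hmemL₁ ℓ).1 hℓ).2.1)
  have hper : ∀ ℓ ∈ L₁, (G ∩ {P | ℓ ∈ P}).ncard = srLah S (r - 1) (n + 2 - ℓ.length) k := by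
    intro ℓ hℓ
    obtain ⟨hgoodℓ, hxℓ, hinter⟩ := (hmemL₁ ℓ).1 hℓ
    obtain ⟨h2s, hsn⟩ := hfacts ℓ hℓ
    have hfib := GSet_fiber S Finset.univ D (k + r) (by omega) (Finset.mem_univ x) hxℓ hgoodℓ
    rw [hGdef, hfib]
    have hintercard : (ℓ.toFinset ∩ D).card = 1 := by
      have h1 := hgoodℓ.2.2.2.2
      have h2 := Finset.card_pos.2 hinter
      omega
    have hAcard : (Finset.univ \ ℓ.toFinset : Finset (Fin (n+1+r))).card
        = (n + 2 - ℓ.length) + (r - 1) := by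
      rw [Finset.card_sdiff_of_subset (Finset.subset_univ _), Finset.card_univ, Fintype.card_fin,
        List.toFinset_card_of_nodup hgoodℓ.2.1]
      omega
    have hD'sub : D \ ℓ.toFinset ⊆ Finset.univ \ ℓ.toFinset := by
      intro a ha
      rw [Finset.mem_sdiff] at ha ⊢
      exact ⟨Finset.mem_univ a, ha.2⟩
    have hD'card : (D \ ℓ.toFinset).card = r - 1 := by
      have := Finset.card_inter_add_card_sdiff D ℓ.toFinset
      rw [Finset.inter_comm] at hintercard
      omega
    obtain ⟨f, hinj, himgf, hiff⟩ := exists_ground_embedding (Finset.univ \ ℓ.toFinset)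
      (D \ ℓ.toFinset) hD'sub (n + 2 - ℓ.length) (r - 1) hAcard hD'card
    have hcongr : GSet S (Finset.univ \ ℓ.toFinset) D (k + r - 1)
        = GSet S (Finset.univ \ ℓ.toFinset) (D \ ℓ.toFinset) (k + r - 1) := by
      apply GSet_congr_D
      ext a
      simp only [Finset.mem_inter, Finset.mem_sdiff, Finset.mem_univ, true_and]
      tauto
    rw [hcongr]
    have hDiff : ∀ a : Fin ((n + 2 - ℓ.length) + (r - 1)),
        a ∈ Finset.univ.filter
          (fun i : Fin ((n + 2 - ℓ.length) + (r - 1)) => (i : ℕ) < r - 1)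
        ↔ f a ∈ D \ ℓ.toFinset := by
      intro a
      rw [Finset.mem_filter, hiff a]
      simp
    have htrans := GSet_transport S f hinj
      (Finset.univ.filter
        (fun i : Fin ((n + 2 - ℓ.length) + (r - 1)) => (i : ℕ) < r - 1))
      (D \ ℓ.toFinset) hDiff (k + r - 1)
    rw [himgf] at htrans
    rw [htrans, Set.ncard_image_of_injOn
      (Function.Injective.injOn (Finset.image_injective (List.map_injective_iff.2 hinj)))]
    rw [srLah, Nat.card_coe_set_eq, srLahSet_eq_GSet]
    have : k + (r - 1) = k + r - 1 := by omega
    rw [this]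
  -- Step 5: evaluate the sum
  have hcard_filter : ∀ s, (L₁.filter (fun ℓ => ℓ.length = s)).card
      = if s ∈ S ∧ 2 ≤ s then r * n.choose (s - 2) * s.factorial else 0 := by
    intro s
    by_cases hcase : s ∈ S ∧ 2 ≤ s
    · rw [if_pos hcase]
      have hcount := count_lists S D x hxD s hcase.1 hcase.2
      have hseteq : {ℓ : List (Fin (n+1+r)) | GoodL S Finset.univ D ℓ ∧ x ∈ ℓ ∧
          (ℓ.toFinset ∩ D).Nonempty ∧ ℓ.length = s}
          = ↑(L₁.filter (fun ℓ => ℓ.length = s)) := by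
        ext ℓ
        simp only [Set.mem_setOf_eq, Finset.coe_filter, hmemL₁ ℓ]
        tauto
      rw [hseteq, Set.ncard_coe_finset, hDcard, Fintype.card_fin,
        show n + 1 + r - r - 1 = n from by omega] at hcount
      exact hcount
    · rw [if_neg hcase, Finset.card_eq_zero, Finset.filter_eq_empty_iff]
      intro ℓ hℓ hlens
      obtain ⟨hgoodℓ, _, _⟩ := (hmemL₁ ℓ).1 hℓ
      exact hcase ⟨hlens ▸ hgoodℓ.2.2.1, hlens ▸ (hfacts ℓ hℓ).1⟩
  have hsum : ∑ ℓ ∈ L₁, srLah S (r - 1) (n + 2 - ℓ.length) k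
      = ∑ s ∈ Finset.range (n + 3),
          (if s ∈ S ∧ 2 ≤ s then r * n.choose (s - 2) * s.factorial else 0)
            * srLah S (r - 1) (n + 2 - s) k := by
    have hfw := Finset.sum_fiberwise_of_maps_to
      (g := fun ℓ : List (Fin (n + 1 + r)) => ℓ.length) (t := Finset.range (n + 3)) (s := L₁)
      (f := fun ℓ => srLah S (r - 1) (n + 2 - ℓ.length) k)
      (fun ℓ hℓ => Finset.mem_range.2 (show ℓ.length < n + 3 by
        have := (hfacts ℓ hℓ).2; omega))
    rw [← hfw]
    refine Finset.sum_congr rfl fun s _ => ?_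
    rw [← hcard_filter s]
    rw [Finset.sum_congr rfl (fun ℓ hℓ => ?_), Finset.sum_const, smul_eq_mul]
    rw [(Finset.mem_filter.1 hℓ).2]
  -- the ℕ-level identity
  have hNat : srLah S r (n + 1) k = srLah S (r + 1) n (k - 1)
      + ∑ s ∈ Finset.range (n + 3),
          (if s ∈ S ∧ 2 ≤ s then r * n.choose (s - 2) * s.factorial else 0)
            * srLah S (r - 1) (n + 2 - s) k := by
    rw [hstep1, hsplitG, hstep3, hstep4, ← hsum]
    congr 1
    exact Finset.sum_congr rfl hper
  -- pass to ℤ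
  set Fz : ℕ → ℤ := fun s => (s.factorial : ℤ) *
      (if 2 ≤ s then (n.choose (s - 2) : ℤ) else 0) *
      srLahZ S (r - 1) ((n : ℤ) - s + 2) k with hFzdef
  have hfinsum : ∑ᶠ s ∈ S, Fz s = ∑ s ∈ (Finset.range (n + 3)).filter (· ∈ S), Fz s := by
    apply finsum_mem_eq_sum_of_inter_support_eq
    ext s
    simp only [Set.mem_inter_iff, Function.mem_support, Finset.coe_filter, Finset.mem_range,
      Set.mem_setOf_eq]
    constructor
    · rintro ⟨hsS, hFz⟩
      refine ⟨⟨?_, hsS⟩, hFz⟩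
      by_contra hbig
      apply hFz
      rw [hFzdef]
      simp only
      rw [if_pos (by omega), Nat.choose_eq_zero_of_lt (by omega)]
      simp
    · rintro ⟨⟨_, hsS⟩, hFz⟩
      exact ⟨hsS, hFz⟩
  rw [hNat, hfinsum, Finset.sum_filter, Finset.mul_sum]
  push_cast
  rw [add_right_inj]
  refine Finset.sum_congr rfl fun s hs => ?_
  rw [Finset.mem_range] at hs
  by_cases hsS : s ∈ S
  · by_cases h2 : 2 ≤ s
    · rw [if_pos ⟨hsS, h2⟩, if_pos hsS, hFzdef]
      simp only
      rw [if_pos h2]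
      have hz : srLahZ S (r - 1) ((n : ℤ) - s + 2) k = (srLah S (r - 1) (n + 2 - s) k : ℤ) := by
        rw [srLahZ, if_pos ⟨by omega, by omega⟩,
          show ((n : ℤ) - s + 2).toNat = n + 2 - s from by omega,
          show ((k : ℕ) : ℤ).toNat = k from by omega]
      rw [hz]
      push_cast
      ring
    · rw [if_neg (fun h => h2 h.2), if_pos hsS, hFzdef]
      simp only
      rw [if_neg h2]
      push_cast
      ring
  · rw [if_neg (fun h => hsS h.1), if_neg hsS]
    push_cast
    ring
end

section
/- Let S be a set of positive integers, r ≥ 1 an integer, and n ≥ 1, k ≥ 1 integers. Then L_{S,r}(n,k) = Σ_{s∈S} s!·C(n, s−1)·L_{S,r−1}(n−s+1, k), where the sum has only finitely many nonzero terms (terms with s−1 > n vanish). -/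
open Finset Function
open scoped Classical

set_option linter.unusedSectionVars false
set_option maxHeartbeats 1000000

section Lists

variable {α : Type*} [Fintype α] [DecidableEq α]

/-- nodup lists of length `s` with elements in `A`. -/
def listsIn (A : Finset α) (s : ℕ) : Set (List α) :=
  {l | l.Nodup ∧ l.length = s ∧ ∀ x ∈ l, x ∈ A}

lemma listsIn_finite (A : Finset α) (s : ℕ) : (listsIn A s).Finite :=
  (List.finite_length_eq α s).subset (fun _ hl => hl.2.1)

noncomputable def listsInEquiv (A : Finset α) (s : ℕ) :
    (listsIn A s) ≃ (Fin s ↪ A) where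
  toFun l := ⟨fun i => ⟨l.1.get (Fin.cast l.2.2.1.symm i), l.2.2.2 _ (List.get_mem _ _)⟩,
    by
      intro a b hab
      have h1 : l.1.get (Fin.cast l.2.2.1.symm a) = l.1.get (Fin.cast l.2.2.1.symm b) :=
        congrArg Subtype.val hab
      have h2 := List.nodup_iff_injective_get.mp l.2.1 h1
      simpa [Fin.ext_iff] using congrArg Fin.val h2⟩
  invFun f := ⟨List.ofFn (fun i => (f i : α)), by
      refine ⟨List.nodup_ofFn.mpr ?_, by simp, ?_⟩
      · intro a b hab
        exact f.injective (Subtype.ext hab)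
      · intro x hx
        rcases List.mem_ofFn.mp hx with ⟨i, rfl⟩
        exact (f i).2⟩
  left_inv l := by
    apply Subtype.ext
    apply List.ext_get (by simp [l.2.2.1])
    intro i h1 h2
    simp [List.get_ofFn]
    rfl
  right_inv f := by
    ext i
    simp [List.get_ofFn]

lemma card_listsIn (A : Finset α) (s : ℕ) :
    Nat.card (listsIn A s) = A.card.descFactorial s := by
  rw [Nat.card_congr (listsInEquiv A s), Nat.card_eq_fintype_card,
    Fintype.card_embedding_eq, Fintype.card_fin, Fintype.card_coe]

end Lists
set_option linter.unusedSectionVars false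

lemma lower_filter_iff {m t : ℕ} (p : Fin m → Prop) [DecidablePred p]
    (hlow : ∀ a b : Fin m, a ≤ b → p b → p a)
    (hcard : (univ.filter p).card = t) (j : Fin m) : p j ↔ (j : ℕ) < t := by
  constructor
  · intro hj
    have hsub : Finset.Iic j ⊆ univ.filter p := by
      intro a ha
      simp only [Finset.mem_Iic] at ha
      exact Finset.mem_filter.mpr ⟨Finset.mem_univ _, hlow a j ha hj⟩
    have := Finset.card_le_card hsub
    rw [Fin.card_Iic, hcard] at this
    omega
  · intro hj
    by_contra hpj
    have hsub : univ.filter p ⊆ Finset.Iio j := by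
      intro a ha
      simp only [Finset.mem_Iio]
      rcases lt_or_ge a j with h | h
      · exact h
      · exact absurd (hlow j a h (Finset.mem_filter.mp ha).2) hpj
    have := Finset.card_le_card hsub
    rw [Fin.card_Iio, hcard] at this
    omega

lemma card_filter_val_lt (N r : ℕ) (h : r ≤ N) :
    (univ.filter fun x : Fin N => (x : ℕ) < r).card = r := by
  classical
  apply Finset.card_bij' (i := fun (x : Fin N) _ => (x : ℕ))
    (j := fun (i : ℕ) (hi : i ∈ Finset.range r) =>
      (⟨i, by simp only [Finset.mem_range] at hi; omega⟩ : Fin N))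
    (hi := fun x hx => by simpa using (Finset.mem_filter.mp hx).2)
    (hj := fun i hi => by
      simp only [Finset.mem_range] at hi
      exact Finset.mem_filter.mpr ⟨Finset.mem_univ _, hi⟩)
    (left_inv := fun x hx => rfl)
    (right_inv := fun i hi => rfl) |>.trans (Finset.card_range r)

lemma card_filter_val_ge (N r : ℕ) (h : r ≤ N) :
    (univ.filter fun x : Fin N => r ≤ (x : ℕ)).card = N - r := by
  have h1 : (univ.filter fun x : Fin N => r ≤ (x : ℕ)) =
      univ \ (univ.filter fun x : Fin N => (x : ℕ) < r) := by
    rw [← Finset.filter_not]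
    congr 1
    ext x
    omega
  rw [h1, Finset.card_sdiff_of_subset (Finset.filter_subset _ _), card_filter_val_lt N r h, Finset.card_univ,
    Fintype.card_fin]

lemma descFact_arith (n k : ℕ) :
    (n + 1).descFactorial (k + 1) =
      n.descFactorial (k + 1) + (k + 1) * (k.factorial * n.choose k) := by
  rw [← Nat.descFactorial_eq_factorial_mul_choose, Nat.succ_descFactorial_succ,
    Nat.descFactorial_succ]
  rcases le_or_gt k n with h | h
  · have : n + 1 = (n - k) + (k + 1) := by omega
    rw [this, Nat.add_mul]
  · rw [Nat.descFactorial_eq_zero_iff_lt.mpr h]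
    ring

/-- the set of candidate lists of length `s` (containing the 0 element, others ≥ r). -/
def FsSet (r n s : ℕ) : Set (List (Fin (n + r))) :=
  {l | l.Nodup ∧ l.length = s ∧ (∃ x ∈ l, (x : ℕ) = 0) ∧
    ∀ x ∈ l, (x : ℕ) = 0 ∨ r ≤ (x : ℕ)}

lemma FsSet_finite (r n s : ℕ) : (FsSet r n s).Finite :=
  (List.finite_length_eq (Fin (n + r)) s).subset (fun _ hl => hl.2.1)

lemma card_FsSet (r n s : ℕ) (hr : 1 ≤ r) (hs : 1 ≤ s) :
    Nat.card (FsSet r n s) = s.factorial * n.choose (s - 1) := by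
  have hN : 0 < n + r := by omega
  set z : Fin (n + r) := ⟨0, hN⟩ with hz
  set B : Finset (Fin (n + r)) := univ.filter (fun x : Fin (n + r) => r ≤ (x : ℕ)) with hB
  have hzB : z ∉ B := by simp [hB, hz]; omega
  have hBcard : B.card = n := by
    rw [hB, card_filter_val_ge (n + r) r (by omega)]
    omega
  have hmemB : ∀ x : Fin (n + r), x ∈ B ↔ r ≤ (x : ℕ) := by
    intro x; simp [hB]
  have hmemz : ∀ x : Fin (n + r), x = z ↔ (x : ℕ) = 0 := by
    intro x; rw [Fin.ext_iff]
  -- decompose listsIn (insert z B) s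
  have hdecomp : listsIn (insert z B) s = FsSet r n s ∪ listsIn B s := by
    ext l
    simp only [listsIn, FsSet, Set.mem_setOf_eq, Set.mem_union]
    constructor
    · rintro ⟨h1, h2, h3⟩
      by_cases hzl : z ∈ l
      · exact Or.inl ⟨h1, h2, ⟨z, hzl, rfl⟩, fun x hx => by
          rcases Finset.mem_insert.mp (h3 x hx) with h | h
          · exact Or.inl ((hmemz x).mp h)
          · exact Or.inr ((hmemB x).mp h)⟩
      · refine Or.inr ⟨h1, h2, fun x hx => ?_⟩
        rcases Finset.mem_insert.mp (h3 x hx) with h | h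
        · exact absurd (h ▸ hx) hzl
        · exact h
    · rintro (⟨h1, h2, _, h4⟩ | ⟨h1, h2, h3⟩)
      · exact ⟨h1, h2, fun x hx => Finset.mem_insert.mpr (by
          rcases h4 x hx with h | h
          · exact Or.inl ((hmemz x).mpr h)
          · exact Or.inr ((hmemB x).mpr h))⟩
      · exact ⟨h1, h2, fun x hx => Finset.mem_insert_of_mem (h3 x hx)⟩
  have hdisj : Disjoint (FsSet r n s) (listsIn B s) := by
    rw [Set.disjoint_left]
    rintro l ⟨_, _, ⟨x, hxl, hx0⟩, _⟩ ⟨_, _, hB'⟩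
    have := (hmemB x).mp (hB' x hxl)
    omega
  have hcard := Set.ncard_union_eq hdisj (FsSet_finite r n s) (listsIn_finite B s)
  rw [← hdecomp] at hcard
  have e1 : (listsIn (insert z B) s).ncard = (n + 1).descFactorial s := by
    rw [← Nat.card_coe_set_eq, card_listsIn, Finset.card_insert_of_notMem hzB, hBcard]
  have e2 : (listsIn B s).ncard = n.descFactorial s := by
    rw [← Nat.card_coe_set_eq, card_listsIn, hBcard]
  rw [Nat.card_coe_set_eq]
  obtain ⟨k, rfl⟩ : ∃ k, s = k + 1 := ⟨s - 1, by omega⟩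
  have goal' : (FsSet r n (k + 1)).ncard + n.descFactorial (k + 1) =
      (n + 1).descFactorial (k + 1) := by rw [← e2, ← e1, hcard]
  rw [descFact_arith n k] at goal'
  have hfact : (k + 1).factorial * n.choose k = (k + 1) * (k.factorial * n.choose k) := by
    rw [Nat.factorial_succ]; ring
  simp only [Nat.add_sub_cancel]
  omega




lemma fiber_card (S : Set ℕ) (r n k s : ℕ) (hr : 1 ≤ r) (hs1 : 1 ≤ s) (hsn : s ≤ n + 1)
    (hsS : s ∈ S) (l : List (Fin (n + r))) (hnd : l.Nodup) (hlen : l.length = s)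
    (h0 : ∃ x ∈ l, (x : ℕ) = 0) (hbig : ∀ x ∈ l, (x : ℕ) = 0 ∨ r ≤ (x : ℕ)) :
    Nat.card {P | P ∈ srLahSet S r n k ∧ l ∈ P} = srLah S (r - 1) (n + 1 - s) k := by
  classical
  obtain ⟨x0, hx0l, hx0v⟩ := h0
  set C : Finset (Fin (n + r)) := univ \ l.toFinset with hCdef
  have hmemC : ∀ x : Fin (n + r), x ∈ C ↔ x ∉ l := by
    intro x; simp [hCdef]
  have hm : C.card = (n + 1 - s) + (r - 1) := by
    rw [hCdef, Finset.card_sdiff_of_subset (Finset.subset_univ _), Finset.card_univ, Fintype.card_fin,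
      List.toFinset_card_of_nodup hnd, hlen]
    omega
  set e := C.orderIsoOfFin hm with hedef
  set ψ : Fin ((n + 1 - s) + (r - 1)) → Fin (n + r) := fun j => (e j : Fin (n + r)) with hψdef
  have hψC : ∀ j, ψ j ∈ C := fun j => (e j).2
  have hψnl : ∀ j, ψ j ∉ l := fun j => (hmemC _).mp (hψC j)
  have hψinj : Injective ψ := fun a b hab => e.injective (Subtype.ext hab)
  have hmapinj : Injective (List.map ψ) := List.map_injective_iff.mpr hψinj
  have hsmall : ∀ j, (ψ j : ℕ) < r ↔ (j : ℕ) < r - 1 := by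
    have hTeq : (C.filter fun x : Fin (n + r) => (x : ℕ) < r) =
        (univ.filter fun x : Fin (n + r) => (x : ℕ) < r).erase x0 := by
      ext x
      simp only [Finset.mem_filter, Finset.mem_erase, Finset.mem_univ, true_and, hmemC]
      constructor
      · rintro ⟨hxl, hxr⟩
        exact ⟨fun hc => hxl (hc ▸ hx0l), hxr⟩
      · rintro ⟨hne, hxr⟩
        refine ⟨fun hxl => ?_, hxr⟩
        rcases hbig x hxl with h | h
        · exact hne (Fin.ext (by omega))
        · omega
    have hx0mem : x0 ∈ univ.filter fun x : Fin (n + r) => (x : ℕ) < r := by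
      simp only [Finset.mem_filter, Finset.mem_univ, true_and]; omega
    have hTcard : (C.filter fun x : Fin (n + r) => (x : ℕ) < r).card = r - 1 := by
      rw [hTeq, Finset.card_erase_of_mem hx0mem, card_filter_val_lt (n + r) r (by omega)]
    have hcardD : (univ.filter fun j : Fin ((n + 1 - s) + (r - 1)) =>
        ((ψ j : Fin (n + r)) : ℕ) < r).card = r - 1 := by
      refine Eq.trans (Finset.card_bij (fun j _ => ψ j) ?_ ?_ ?_) hTcard
      · intro j hj
        simp only [Finset.mem_filter, Finset.mem_univ, true_and] at hj ⊢
        exact ⟨hψC j, hj⟩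
      · intro a _ b _ hab
        exact hψinj hab
      · intro x hx
        simp only [Finset.mem_filter] at hx
        refine ⟨e.symm ⟨x, hx.1⟩, ?_, ?_⟩
        · simp only [Finset.mem_filter, Finset.mem_univ, true_and]
          show ((e (e.symm ⟨x, hx.1⟩) : Fin (n + r)) : ℕ) < r
          rw [OrderIso.apply_symm_apply]
          exact hx.2
        · show (e (e.symm ⟨x, hx.1⟩) : Fin (n + r)) = x
          rw [OrderIso.apply_symm_apply]
    intro j
    apply lower_filter_iff _ _ hcardD
    intro a b hab hb
    have h1 : e a ≤ e b := e.monotone hab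
    have h2 : (ψ a : ℕ) ≤ (ψ b : ℕ) := h1
    omega
  set g : List (Fin (n + r)) → List (Fin ((n + 1 - s) + (r - 1))) :=
    fun l' => l'.filterMap (fun x => if h : x ∈ C then some (e.symm ⟨x, h⟩) else none) with hgdef
  have hgψ : ∀ l', (∀ x ∈ l', x ∈ C) → List.map ψ (g l') = l' := by
    intro l' h
    induction l' with
    | nil => rfl
    | cons a t ih =>
      have ha : a ∈ C := h a List.mem_cons_self
      have h1 : g (a :: t) = e.symm ⟨a, ha⟩ :: g t := by
        simp only [hgdef, List.filterMap_cons, dif_pos ha]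
      rw [h1, List.map_cons, ih (fun x hx => h x (List.mem_cons_of_mem _ hx))]
      congr 1
      show ((e (e.symm ⟨a, ha⟩)) : Fin (n + r)) = a
      rw [OrderIso.apply_symm_apply]
  have hgψ' : ∀ L, g (List.map ψ L) = L := by
    intro L
    apply hmapinj
    apply hgψ
    intro x hx
    rcases List.mem_map.mp hx with ⟨y, _, rfl⟩
    exact hψC y
  have hlne : ∀ lg, l ≠ List.map ψ lg := by
    intro lg hcon
    have : x0 ∈ List.map ψ lg := hcon ▸ hx0l
    rcases List.mem_map.mp this with ⟨y, _, hy⟩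
    exact hψnl y (hy ▸ hx0l)
  set Φ : Finset (List (Fin ((n + 1 - s) + (r - 1)))) → Finset (List (Fin (n + r))) :=
    fun P' => insert l (P'.image (List.map ψ)) with hΦdef
  have hΦinj : Injective Φ := by
    have haux : ∀ P1 P2, Φ P1 = Φ P2 → P1 ⊆ P2 := by
      intro P1 P2 h12 lg hlg
      have h1 : List.map ψ lg ∈ Φ P2 := by
        rw [← h12, hΦdef]
        exact Finset.mem_insert_of_mem (Finset.mem_image_of_mem _ hlg)
      rcases Finset.mem_insert.mp h1 with h | h
      · exact absurd h.symm (hlne lg)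
      · rcases Finset.mem_image.mp h with ⟨lg', hlg', heq⟩
        exact (hmapinj heq) ▸ hlg'
    exact fun P1 P2 h => Finset.Subset.antisymm (haux _ _ h) (haux _ _ h.symm)
  have himg : {P | P ∈ srLahSet S r n k ∧ l ∈ P} = Φ '' (srLahSet S (r - 1) (n + 1 - s) k) := by
    apply Set.Subset.antisymm
    · rintro P ⟨hP, hlP⟩
      obtain ⟨⟨hPne, hPuniq⟩, hPcard, hPlen, hPsm⟩ := hP
      have hCl : ∀ l' ∈ P, l' ≠ l → ∀ x ∈ l', x ∈ C := by
        intro l' hl' hne x hx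
        rw [hmemC]
        intro hxl
        exact hne ((hPuniq x).unique ⟨hl', hx⟩ ⟨hlP, hxl⟩)
      set P' := (P.erase l).image g with hP'def
      have key : ∀ l' ∈ P.erase l, List.map ψ (g l') = l' := fun l' h =>
        hgψ l' (hCl l' (Finset.mem_of_mem_erase h) (Finset.ne_of_mem_erase h))
      have hgmem : ∀ lg ∈ P', ∃ l' ∈ P.erase l, g l' = lg := fun lg h => by
        rcases Finset.mem_image.mp h with ⟨a, ha, rfl⟩; exact ⟨a, ha, rfl⟩
      refine ⟨P', ?_, ?_⟩
      · have hginj : Set.InjOn g (P.erase l) := by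
          intro a ha b hb hab
          rw [← key a ha, ← key b hb, hab]
        refine ⟨⟨?_, ?_⟩, ?_, ?_, ?_⟩
        · intro lg hlg
          obtain ⟨l', hl', rfl⟩ := hgmem lg hlg
          have hl'P := Finset.mem_of_mem_erase hl'
          constructor
          · intro hnil
            have hthis := key l' hl'
            rw [hnil, List.map_nil] at hthis
            exact (hPne l' hl'P).1 hthis.symm
          · exact List.Nodup.of_map ψ (by rw [key l' hl']; exact (hPne l' hl'P).2)
        · intro y
          have hxC : ψ y ∈ C := hψC y
          obtain ⟨l₀, ⟨hl₀, hxl₀⟩, hu⟩ := hPuniq (ψ y)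
          have hl₀ne : l₀ ≠ l := by
            intro hcon
            exact (hmemC _).mp hxC (hcon ▸ hxl₀)
          have hl₀e : l₀ ∈ P.erase l := Finset.mem_erase.mpr ⟨hl₀ne, hl₀⟩
          refine ⟨g l₀, ⟨Finset.mem_image_of_mem g hl₀e, ?_⟩, ?_⟩
          · rw [← List.mem_map_of_injective hψinj, key l₀ hl₀e]
            exact hxl₀
          · rintro lg ⟨hlg, hylg⟩
            obtain ⟨l₁, hl₁, rfl⟩ := hgmem lg hlg
            have hmem1 : ψ y ∈ l₁ := by
              rw [← key l₁ hl₁]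
              exact List.mem_map_of_mem hylg
            rw [hu l₁ ⟨Finset.mem_of_mem_erase hl₁, hmem1⟩]
        · rw [hP'def, Finset.card_image_of_injOn hginj, Finset.card_erase_of_mem hlP, hPcard]
          omega
        · intro lg hlg
          obtain ⟨l', hl', rfl⟩ := hgmem lg hlg
          have hl1 : (g l').length = l'.length := by
            conv_rhs => rw [← key l' hl']
            rw [List.length_map]
          rw [hl1]
          exact hPlen l' (Finset.mem_of_mem_erase hl')
        · intro i j hi hj hij lg hlg hilg hjlg
          obtain ⟨l₁, hl₁, rfl⟩ := hgmem lg hlg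
          have hi' : ψ i ∈ l₁ := by rw [← key l₁ hl₁]; exact List.mem_map_of_mem hilg
          have hj' : ψ j ∈ l₁ := by rw [← key l₁ hl₁]; exact List.mem_map_of_mem hjlg
          exact hPsm (ψ i) (ψ j) ((hsmall i).mpr hi) ((hsmall j).mpr hj)
            (fun hc => hij (hψinj hc)) l₁ (Finset.mem_of_mem_erase hl₁) hi' hj'
      · show insert l (P'.image (List.map ψ)) = P
        have him : P'.image (List.map ψ) = P.erase l := by
          rw [hP'def, Finset.image_image]
          ext l''
          simp only [Finset.mem_image, Function.comp_apply]
          constructor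
          · rintro ⟨a, ha, rfl⟩
            rw [key a ha]; exact ha
          · intro h
            exact ⟨l'', h, key l'' h⟩
        rw [him, Finset.insert_erase hlP]
    · rintro _ ⟨P', hP', rfl⟩
      obtain ⟨⟨hPne, hPuniq⟩, hPcard, hPlen, hPsm⟩ := hP'
      have hlnotmem : l ∉ P'.image (List.map ψ) := by
        intro h
        rcases Finset.mem_image.mp h with ⟨lg, _, heq⟩
        exact hlne lg heq.symm
      have hmem' : ∀ l'' ∈ Φ P', l'' = l ∨ ∃ lg ∈ P', l'' = List.map ψ lg := by
        intro l'' h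
        rcases Finset.mem_insert.mp h with h | h
        · exact Or.inl h
        · rcases Finset.mem_image.mp h with ⟨lg, hlg, rfl⟩
          exact Or.inr ⟨lg, hlg, rfl⟩
      refine ⟨⟨⟨?_, ?_⟩, ?_, ?_, ?_⟩, Finset.mem_insert_self l _⟩
      · intro l'' h
        rcases hmem' l'' h with rfl | ⟨lg, hlg, rfl⟩
        · exact ⟨List.ne_nil_of_mem hx0l, hnd⟩
        · refine ⟨?_, ((hPne lg hlg).2).map hψinj⟩
          intro hnil
          exact (hPne lg hlg).1 (List.map_eq_nil_iff.mp hnil)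
      · intro x
        by_cases hxl : x ∈ l
        · refine ⟨l, ⟨Finset.mem_insert_self l _, hxl⟩, ?_⟩
          rintro l'' ⟨hl'', hxl''⟩
          rcases hmem' l'' hl'' with rfl | ⟨lg, hlg, rfl⟩
          · rfl
          · rcases List.mem_map.mp hxl'' with ⟨y, _, rfl⟩
            exact absurd hxl (hψnl y)
        · have hxC : x ∈ C := (hmemC x).mpr hxl
          have hψy : ψ (e.symm ⟨x, hxC⟩) = x := by
            show ((e (e.symm ⟨x, hxC⟩)) : Fin (n + r)) = x
            rw [OrderIso.apply_symm_apply]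
          obtain ⟨lg, ⟨hlg, hylg⟩, hu⟩ := hPuniq (e.symm ⟨x, hxC⟩)
          refine ⟨List.map ψ lg,
            ⟨Finset.mem_insert_of_mem (Finset.mem_image_of_mem _ hlg), ?_⟩, ?_⟩
          · rw [← hψy]; exact List.mem_map_of_mem hylg
          · rintro l'' ⟨hl'', hxl''⟩
            rcases hmem' l'' hl'' with rfl | ⟨lg₂, hlg₂, rfl⟩
            · exact absurd hxl'' hxl
            · rcases List.mem_map.mp hxl'' with ⟨y₂, hy₂, hyx⟩
              have hyy : y₂ = e.symm ⟨x, hxC⟩ := hψinj (by rw [hyx, hψy])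
              rw [hu lg₂ ⟨hlg₂, hyy ▸ hy₂⟩]
      · show (insert l (P'.image (List.map ψ))).card = k + r
        rw [Finset.card_insert_of_notMem hlnotmem,
          Finset.card_image_of_injective _ hmapinj, hPcard]
        omega
      · intro l'' h
        rcases hmem' l'' h with rfl | ⟨lg, hlg, rfl⟩
        · rw [hlen]; exact hsS
        · rw [List.length_map]; exact hPlen lg hlg
      · intro i j hi hj hij l'' hl'' hil''
        rcases hmem' l'' hl'' with rfl | ⟨lg, hlg, rfl⟩
        · intro hjl
          rcases hbig i hil'' with h | h
          · rcases hbig j hjl with h' | h'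
            · exact hij (Fin.ext (by omega))
            · omega
          · omega
        · intro hjl
          rcases List.mem_map.mp hil'' with ⟨a, ha, rfl⟩
          rcases List.mem_map.mp hjl with ⟨b, hb, rfl⟩
          exact hPsm a b ((hsmall a).mp hi) ((hsmall b).mp hj)
            (fun hc => hij (congrArg ψ hc)) lg hlg ha hb
  rw [himg, Nat.card_coe_set_eq, Set.ncard_image_of_injOn (hΦinj.injOn),
    ← Nat.card_coe_set_eq]
  rfl


lemma srLahSet_finite (S : Set ℕ) (r n k : ℕ) : (srLahSet S r n k).Finite := by
  classical
  apply Set.Finite.subset (Finset.finite_toSet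
    ((List.finite_length_le (Fin (n + r)) (n + r)).toFinset.powerset))
  intro P hP
  simp only [Finset.mem_coe, Finset.mem_powerset]
  intro l hl
  rw [Set.Finite.mem_toFinset]
  have := ((hP.1.1 l hl).2).length_le_card
  simpa using this

def candSet (S : Set ℕ) (r n : ℕ) : Set (List (Fin (n + r))) :=
  {l | l.Nodup ∧ (∃ x ∈ l, (x : ℕ) = 0) ∧ l.length ∈ S ∧
    ∀ x ∈ l, (x : ℕ) = 0 ∨ r ≤ (x : ℕ)}

lemma candSet_finite (S : Set ℕ) (r n : ℕ) : (candSet S r n).Finite :=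
  (List.finite_length_le (Fin (n + r)) (n + r)).subset
    (fun l hl => hl.1.length_le_card.trans (by simp))

lemma srLah_fiber_sum (S : Set ℕ) (r n k : ℕ) (hr : 1 ≤ r) (hn : 1 ≤ n) :
    srLah S r n k =
      ∑ l ∈ (candSet_finite S r n).toFinset,
        Nat.card {P | P ∈ srLahSet S r n k ∧ l ∈ P} := by
  classical
  have hN : 0 < n + r := by omega
  set z : Fin (n + r) := ⟨0, hN⟩ with hz
  set A := (srLahSet_finite S r n k).toFinset with hA
  have hAmem : ∀ P, P ∈ A ↔ P ∈ srLahSet S r n k := fun P => Set.Finite.mem_toFinset _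
  set f : Finset (List (Fin (n + r))) → List (Fin (n + r)) :=
    fun P => if h : ∃ l', l' ∈ P ∧ z ∈ l' then h.choose else [] with hf
  have hfP : ∀ P ∈ A, f P ∈ P ∧ z ∈ f P := by
    intro P hP
    have h := ((hAmem P).mp hP).1.2 z
    have hex : ∃ l', l' ∈ P ∧ z ∈ l' := h.exists
    simp only [hf, dif_pos hex]
    exact hex.choose_spec
  have hfuniq : ∀ P ∈ A, ∀ l' ∈ P, z ∈ l' → f P = l' := by
    intro P hP l' hl' hzl
    exact (((hAmem P).mp hP).1.2 z).unique ⟨(hfP P hP).1, (hfP P hP).2⟩ ⟨hl', hzl⟩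
  have hmaps : ∀ P ∈ A, f P ∈ (candSet_finite S r n).toFinset := by
    intro P hP
    obtain ⟨hfPP, hzf⟩ := hfP P hP
    obtain ⟨⟨hne, huni⟩, hcard, hlen, hsm⟩ := (hAmem P).mp hP
    rw [Set.Finite.mem_toFinset]
    refine ⟨(hne _ hfPP).2, ⟨z, hzf, rfl⟩, hlen _ hfPP, ?_⟩
    intro x hx
    by_contra hcon
    push_neg at hcon
    obtain ⟨h1, h2⟩ := hcon
    have hzv : (z : ℕ) = 0 := rfl
    exact (hsm x z (by omega) (by omega) (fun hc => h1 (by rw [hc, hzv])) (f P) hfPP hx) hzf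
  have hsum := Finset.card_eq_sum_card_fiberwise hmaps
  have hAcard : srLah S r n k = A.card := by
    rw [srLah, Nat.card_coe_set_eq, Set.ncard_eq_toFinset_card _ (srLahSet_finite S r n k)]
  rw [hAcard, hsum]
  apply Finset.sum_congr rfl
  intro l hl
  rw [Nat.card_coe_set_eq]
  have hzl : z ∈ l := by
    obtain ⟨-, ⟨x, hxl, hxv⟩, -, -⟩ := (Set.Finite.mem_toFinset _).mp hl
    have : x = z := Fin.ext (by rw [hxv])
    exact this ▸ hxl
  have hset : {P | P ∈ srLahSet S r n k ∧ l ∈ P} =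
      ↑(A.filter (fun P => f P = l)) := by
    ext P
    simp only [Set.mem_setOf_eq, Finset.coe_filter, Set.mem_setOf_eq, hAmem]
    constructor
    · rintro ⟨hP, hlP⟩
      exact ⟨hP, hfuniq P ((hAmem P).mpr hP) l hlP hzl⟩
    · rintro ⟨hP, hfl⟩
      exact ⟨hP, hfl ▸ (hfP P ((hAmem P).mpr hP)).1⟩
  rw [hset, Set.ncard_coe_finset]


/-- `L_{S,r}(n,k) = Σ_{s∈S} s!·C(n,s−1)·L_{S,r−1}(n−s+1,k)` for `r ≥ 1`. -/
theorem srLah_identity_special_list (S : Set ℕ) (hS : ∀ s ∈ S, 0 < s) (r n k : ℕ)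
    (hr : 1 ≤ r) (hn : 1 ≤ n) (hk : 1 ≤ k) :
    (srLah S r n k : ℤ) =
      ∑ᶠ s ∈ S, (s.factorial : ℤ) * (n.choose (s - 1) : ℤ) *
        srLahZ S (r - 1) ((n : ℤ) - s + 1) k := by
  classical
  have hN : 0 < n + r := by omega
  set Tfin : Finset ℕ := (Finset.Icc 1 (n + 1)).filter (· ∈ S) with hT
  set candFin := (candSet_finite S r n).toFinset with hcF
  -- basic properties of candidate lists
  have hcand : ∀ l ∈ candFin, 1 ≤ l.length ∧ l.length ≤ n + 1 ∧ l.length ∈ S := by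
    intro l hl
    obtain ⟨hnd, ⟨x, hxl, hxv⟩, hlenS, hbig⟩ := (Set.Finite.mem_toFinset _).mp hl
    refine ⟨?_, ?_, hlenS⟩
    · have := List.length_pos_of_mem hxl
      omega
    · have hsub : l.toFinset ⊆ insert (⟨0, hN⟩ : Fin (n + r))
          (univ.filter fun y : Fin (n + r) => r ≤ (y : ℕ)) := by
        intro y hy
        rcases hbig y (List.mem_toFinset.mp hy) with h | h
        · exact Finset.mem_insert.mpr (Or.inl (Fin.ext (by rw [h])))
        · exact Finset.mem_insert_of_mem (by simp [h])
      have h1 := Finset.card_le_card hsub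
      have h2 := Finset.card_insert_le (⟨0, hN⟩ : Fin (n + r))
        (univ.filter fun y : Fin (n + r) => r ≤ (y : ℕ))
      rw [List.toFinset_card_of_nodup hnd] at h1
      have h3 := card_filter_val_ge (n + r) r (by omega)
      omega
  have hmapsT : ∀ l ∈ candFin, l.length ∈ Tfin := by
    intro l hl
    obtain ⟨h1, h2, h3⟩ := hcand l hl
    simp only [hT, Finset.mem_filter, Finset.mem_Icc]
    exact ⟨⟨h1, h2⟩, h3⟩
  -- ℕ-level identity
  have hNat : srLah S r n k =
      ∑ s ∈ Tfin, (s.factorial * n.choose (s - 1)) * srLah S (r - 1) (n + 1 - s) k := by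
    rw [srLah_fiber_sum S r n k hr hn]
    have hstep : ∀ l ∈ candFin,
        Nat.card {P | P ∈ srLahSet S r n k ∧ l ∈ P} =
          srLah S (r - 1) (n + 1 - l.length) k := by
      intro l hl
      obtain ⟨hnd, h0, hlenS, hbig⟩ := (Set.Finite.mem_toFinset _).mp hl
      obtain ⟨h1, h2, -⟩ := hcand l hl
      exact fiber_card S r n k l.length hr h1 h2 hlenS l hnd rfl h0 hbig
    rw [Finset.sum_congr rfl hstep]
    rw [← Finset.sum_fiberwise_of_maps_to hmapsT
      (fun l => srLah S (r - 1) (n + 1 - l.length) k)]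
    apply Finset.sum_congr rfl
    intro s hs
    have hsS : s ∈ S := (Finset.mem_filter.mp hs).2
    have hs1 : 1 ≤ s := by
      have := (Finset.mem_filter.mp hs).1
      simp only [Finset.mem_Icc] at this
      omega
    have hinner : ∀ l ∈ candFin.filter (fun l => l.length = s),
        srLah S (r - 1) (n + 1 - l.length) k = srLah S (r - 1) (n + 1 - s) k := by
      intro l hl
      rw [(Finset.mem_filter.mp hl).2]
    rw [Finset.sum_congr rfl hinner, Finset.sum_const, smul_eq_mul]
    congr 1
    -- card of filtered candidates = s! * C(n, s-1)
    have hseteq : ↑(candFin.filter (fun l => l.length = s)) = FsSet r n s := by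
      ext l
      simp only [Finset.coe_filter, Set.mem_setOf_eq, hcF, Set.Finite.mem_toFinset]
      constructor
      · rintro ⟨⟨hnd, h0, hlenS, hbig⟩, hlen⟩
        exact ⟨hnd, hlen, h0, hbig⟩
      · rintro ⟨hnd, hlen, h0, hbig⟩
        exact ⟨⟨hnd, h0, hlen ▸ hsS, hbig⟩, hlen⟩
    have := Set.ncard_coe_finset (candFin.filter (fun l => l.length = s))
    rw [hseteq] at this
    rw [← card_FsSet r n s hr hs1, Nat.card_coe_set_eq, ← this]
  -- pass to ℤ and finsum
  have hfz : ∑ᶠ s ∈ S, (s.factorial : ℤ) * (n.choose (s - 1) : ℤ) *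
      srLahZ S (r - 1) ((n : ℤ) - s + 1) k =
      ∑ s ∈ Tfin, (s.factorial : ℤ) * (n.choose (s - 1) : ℤ) *
        srLahZ S (r - 1) ((n : ℤ) - s + 1) k := by
    apply finsum_mem_eq_sum_of_inter_support_eq
    ext x
    simp only [Set.mem_inter_iff, Function.mem_support, Finset.coe_filter, Set.mem_setOf_eq,
      hT, Finset.mem_Icc]
    constructor
    · rintro ⟨hxS, hne⟩
      refine ⟨⟨⟨hS x hxS, ?_⟩, hxS⟩, hne⟩
      by_contra hgt
      push_neg at hgt
      have : n.choose (x - 1) = 0 := Nat.choose_eq_zero_of_lt (by omega)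
      rw [this] at hne
      simp at hne
    · rintro ⟨⟨-, hxS⟩, hne⟩
      exact ⟨hxS, hne⟩
  rw [hfz, hNat]
  push_cast
  apply Finset.sum_congr rfl
  intro s hs
  have hs' := Finset.mem_filter.mp hs
  simp only [Finset.mem_Icc] at hs'
  have h1 : 1 ≤ s := hs'.1.1
  have h2 : s ≤ n + 1 := hs'.1.2
  have hcond : (0 : ℤ) ≤ (n : ℤ) - s + 1 ∧ (0 : ℤ) ≤ (k : ℤ) := by
    constructor <;> omega
  rw [srLahZ, if_pos hcond]
  have htoNat : ((n : ℤ) - s + 1).toNat = n + 1 - s := by omega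
  have hktoNat : ((k : ℤ) : ℤ).toNat = k := by omega
  rw [htoNat]
  norm_num
end
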